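/- arXiv:1907.03147 — 7 statements merged into one kernel-verified Lean document; each statement's English description precedes it below -/
import Mathlib

section
/- Let q be an odd prime and let x, y be positive rational numbers with x² + qy² = 1. Then every odd prime factor p of the least common denominator of x and y satisfies that −q is a quadratic residue modulo p (in particular p ≠ q and p is odd). -/
/-- If a rational's denominator divides `c`, then `x * c` is an integer. -/
lemma exists_int_of_den_dvd (x : ℚ) (c : ℕ) (h : x.den ∣ c) :
    ∃ a : ℤ, (a : ℚ) = x * c := by
  obtain ⟨k, hk⟩ := h
  refine ⟨x.num * k, ?_⟩
  have hden : (x.den : ℚ) ≠ 0 := by exact_mod_cast x.den_nz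
  have hx : (x.num : ℚ) = x * x.den := (div_eq_iff hden).mp (Rat.num_div_den x)
  push_cast
  rw [hx, hk]
  push_cast
  ring

/-- If `x = a / d` with `d ≠ 0`, then `x.den ∣ d`. -/
lemma den_dvd_of_eq_div (x : ℚ) (a : ℤ) (d : ℕ) (h : x = (a : ℚ) / (d : ℚ)) :
    x.den ∣ d := by
  have h' : x = Rat.divInt a (d : ℤ) := by rw [Rat.divInt_eq_div]; exact_mod_cast h
  have hdvd := Rat.den_dvd a (d : ℤ)
  rw [← h'] at hdvd
  exact_mod_cast hdvd

/-- If `q` is an odd prime and `x, y` are positive rationals with `x² + q·y² = 1`, then every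
odd prime factor `p` of the least common denominator of `x` and `y` is `q`-appropriate:
`p ≠ q` and `−q` is a quadratic residue modulo `p`. -/
theorem odd_prime_factor_of_denominator_is_appropriate
    (q : ℕ) (hq : q.Prime) (hqodd : Odd q)
    (x y : ℚ) (hx : 0 < x) (hy : 0 < y)
    (hxy : x ^ 2 + (q : ℚ) * y ^ 2 = 1)
    (p : ℕ) (hp : p.Prime) (hpodd : Odd p)
    (hdvd : p ∣ Nat.lcm x.den y.den) :
    p ≠ q ∧ IsSquare (-(q : ZMod p)) := by
  set c := Nat.lcm x.den y.den with hc
  have hc0 : c ≠ 0 := Nat.lcm_ne_zero x.den_nz y.den_nz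
  obtain ⟨a, ha⟩ := exists_int_of_den_dvd x c (Nat.dvd_lcm_left _ _)
  obtain ⟨b, hb⟩ := exists_int_of_den_dvd y c (Nat.dvd_lcm_right _ _)
  have hpq0 : (p : ℚ) ≠ 0 := by exact_mod_cast hp.ne_zero
  -- main integer equation
  have key : a ^ 2 + (q : ℤ) * b ^ 2 = (c : ℤ) ^ 2 := by
    have h2 : ((a : ℚ)) ^ 2 + (q : ℚ) * (b : ℚ) ^ 2 = ((c : ℚ)) ^ 2 := by
      rw [ha, hb]
      have h3 : (x * c) ^ 2 + (q : ℚ) * (y * c) ^ 2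
          = (x ^ 2 + (q : ℚ) * y ^ 2) * (c : ℚ) ^ 2 := by ring
      rw [h3, hxy, one_mul]
    exact_mod_cast h2
  have hpint : Prime (p : ℤ) := Nat.prime_iff_prime_int.mp hp
  have hpc : (p : ℤ) ∣ (c : ℤ) := by exact_mod_cast hdvd
  -- p does not divide both a and b
  have hnot : ¬ ((p : ℤ) ∣ a ∧ (p : ℤ) ∣ b) := by
    rintro ⟨⟨a', ha'⟩, ⟨b', hb'⟩⟩
    obtain ⟨c', hc'⟩ := hdvd
    have hc'0 : c' ≠ 0 := by rintro rfl; simp at hc'; exact hc0 hc'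
    have hc'q : (c' : ℚ) ≠ 0 := by exact_mod_cast hc'0
    have hxc' : x * (c' : ℚ) = (a' : ℚ) := by
      have h1 : (p : ℚ) * (x * c') = (p : ℚ) * (a' : ℚ) := by
        rw [show (p : ℚ) * (x * c') = x * ((p : ℚ) * c') by ring,
          show ((p : ℚ) * (c' : ℚ)) = ((c : ℚ)) by exact_mod_cast congrArg (Nat.cast : ℕ → ℚ) hc'.symm,
          ← ha, ha']
        push_cast; ring
      exact mul_left_cancel₀ hpq0 h1
    have hyc' : y * (c' : ℚ) = (b' : ℚ) := by
      have h1 : (p : ℚ) * (y * c') = (p : ℚ) * (b' : ℚ) := by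
        rw [show (p : ℚ) * (y * c') = y * ((p : ℚ) * c') by ring,
          show ((p : ℚ) * (c' : ℚ)) = ((c : ℚ)) by exact_mod_cast congrArg (Nat.cast : ℕ → ℚ) hc'.symm,
          ← hb, hb']
        push_cast; ring
      exact mul_left_cancel₀ hpq0 h1
    have hxden : x.den ∣ c' :=
      den_dvd_of_eq_div x a' c' (by rw [eq_div_iff hc'q]; exact hxc'.symm ▸ hxc')
    have hyden : y.den ∣ c' :=
      den_dvd_of_eq_div y b' c' (by rw [eq_div_iff hc'q]; exact hyc'.symm ▸ hyc')
    have hlcm : c ∣ c' := Nat.lcm_dvd hxden hyden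
    have : c ≤ c' := Nat.le_of_dvd (Nat.pos_of_ne_zero hc'0) hlcm
    have : p * c' ≤ c' := hc' ▸ this
    nlinarith [hp.two_le, Nat.pos_of_ne_zero hc'0]
  -- p ≠ q
  have hpneq : p ≠ q := by
    rintro rfl
    have hpa2 : (p : ℤ) ∣ a ^ 2 := by
      have : a ^ 2 = (c : ℤ) ^ 2 - (p : ℤ) * b ^ 2 := by linarith [key]
      rw [this]
      exact dvd_sub (dvd_pow hpc two_ne_zero) (Dvd.intro _ rfl)
    have hpa : (p : ℤ) ∣ a := hpint.dvd_of_dvd_pow hpa2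
    have hpb2 : (p : ℤ) ∣ b ^ 2 := by
      have h4 : (p : ℤ) ^ 2 ∣ (p : ℤ) * b ^ 2 := by
        have : (p : ℤ) * b ^ 2 = (c : ℤ) ^ 2 - a ^ 2 := by linarith [key]
        rw [this]
        exact dvd_sub (pow_dvd_pow_of_dvd hpc 2) (pow_dvd_pow_of_dvd hpa 2)
      obtain ⟨t, ht⟩ := h4
      have hpz : (p : ℤ) ≠ 0 := by exact_mod_cast hp.ne_zero
      refine ⟨t, ?_⟩
      have : (p : ℤ) * b ^ 2 = (p : ℤ) * ((p : ℤ) * t) := by rw [ht]; ring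
      exact mul_left_cancel₀ hpz this
    exact hnot ⟨hpa, hpint.dvd_of_dvd_pow hpb2⟩
  refine ⟨hpneq, ?_⟩
  -- work in ZMod p
  haveI : Fact p.Prime := ⟨hp⟩
  have hcz : ((c : ℤ) : ZMod p) = 0 := by
    have : ((c : ℕ) : ZMod p) = 0 := (ZMod.natCast_eq_zero_iff c p).mpr hdvd
    exact_mod_cast this
  have hzer : (a : ZMod p) ^ 2 + (q : ZMod p) * (b : ZMod p) ^ 2 = 0 := by
    have h := congrArg (Int.cast : ℤ → ZMod p) key
    push_cast at h
    rw [h]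
    have hcz' : (c : ZMod p) = 0 := by exact_mod_cast hcz
    rw [hcz']; ring
  have hb0 : (b : ZMod p) ≠ 0 := by
    intro hb0
    have ha0 : (a : ZMod p) = 0 := by
      have : (a : ZMod p) ^ 2 = 0 := by rw [← hzer, hb0]; ring
      exact pow_eq_zero_iff two_ne_zero |>.mp this
    exact hnot ⟨(ZMod.intCast_zmod_eq_zero_iff_dvd a p).mp ha0,
      (ZMod.intCast_zmod_eq_zero_iff_dvd b p).mp hb0⟩
  refine ⟨(a : ZMod p) * (b : ZMod p)⁻¹, ?_⟩
  have hbi : (b : ZMod p) * (b : ZMod p)⁻¹ = 1 := mul_inv_cancel₀ hb0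
  field_simp
  linear_combination -hzer
end

section
/- Let q be an odd prime and p a q-appropriate prime (i.e., p is odd, p ≠ q, and −q is a square mod p). Then there exist integers a, b and k ≥ 1 with gcd(a, b, p) = 1 such that a² + q·b² = p^(2k); consequently the equation X² + qY² = 1 has a solution (x,y) in the ring ℤ[1/p] with y ≠ 0. -/
section Aux

/-- Hensel lifting of a square root of `-q` modulo powers of an odd prime `p`. -/
lemma aux_hensel (q p : ℕ) (hp : p.Prime) (hpodd : Odd p) (u0 : ℤ)
    (hd : (p:ℤ) ∣ u0^2 + q) (hnd : ¬ (p:ℤ) ∣ u0) :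
    ∀ k : ℕ, ∃ u : ℤ, (p:ℤ) ∣ (u - u0) ∧ (p:ℤ)^(k+1) ∣ u^2 + q := by
  intro k
  induction k with
  | zero => exact ⟨u0, by simp, by simpa using hd⟩
  | succ n ih =>
    obtain ⟨u, hu1, hu2⟩ := ih
    -- p ∤ 2*u
    have hpu : ¬ (p:ℤ) ∣ u := by
      intro h
      exact hnd (by have := dvd_sub h hu1; simpa using this)
    have hp2 : ¬ (p:ℤ) ∣ 2 := by
      intro h
      have h2 : p ∣ 2 := by exact_mod_cast h
      have := (Nat.prime_dvd_prime_iff_eq hp Nat.prime_two).mp h2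
      subst this
      simp [Nat.odd_iff] at hpodd
    have hP : Prime (p:ℤ) := Nat.prime_iff_prime_int.mp hp
    have hco : IsCoprime ((p:ℤ)) (2*u) := by
      rw [Prime.coprime_iff_not_dvd hP]
      intro h
      rcases hP.dvd_mul.mp h with h | h
      · exact hp2 h
      · exact hpu h
    obtain ⟨x, y, hxy⟩ := hco
    obtain ⟨w, hw⟩ := hu2
    -- choose c with p ∣ w + 2*u*c
    refine ⟨u + (-w * y) * (p:ℤ)^(n+1), ?_, ?_⟩
    · have : (p:ℤ) ∣ (-w * y) * (p:ℤ)^(n+1) :=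
        Dvd.dvd.mul_left (dvd_pow_self _ (Nat.succ_ne_zero n)) _
      have h2 := dvd_add hu1 this
      have h3 : u + (-w * y) * (p:ℤ)^(n+1) - u0 = (u - u0) + (-w * y) * (p:ℤ)^(n+1) := by ring
      rw [h3]; exact h2
    · have hkey : (p:ℤ) ∣ w + 2*u*(-w*y) := by
        have : w + 2*u*(-w*y) = w * (1 - 2*u*y) := by ring
        rw [this]
        have h1 : 1 - 2*u*y = x * p := by linear_combination -hxy
        rw [h1]
        exact ⟨w*x, by ring⟩
      obtain ⟨t, ht⟩ := hkey
      have : (u + (-w * y) * (p:ℤ)^(n+1))^2 + q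
          = (p:ℤ)^(n+2) * t + ((-w*y)^2 * (p:ℤ)^n) * (p:ℤ)^(n+2) := by
        have hh : (u + (-w * y) * (p:ℤ)^(n+1))^2 + (q:ℤ)
            = (u^2 + q) + (p:ℤ)^(n+1) * (2*u*(-w*y)) + (-w*y)^2 * ((p:ℤ)^(n+1))^2 := by
          ring
        rw [hh, hw]
        have hp1 : (p:ℤ)^(n+1) * w + (p:ℤ)^(n+1) * (2*u*(-w*y))
            = (p:ℤ)^(n+1) * (w + 2*u*(-w*y)) := by ring
        calc (p:ℤ)^(n+1) * w + (p:ℤ)^(n+1) * (2*u*(-w*y)) + (-w*y)^2 * ((p:ℤ)^(n+1))^2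
            = (p:ℤ)^(n+1) * (w + 2*u*(-w*y)) + (-w*y)^2 * ((p:ℤ)^(n+1))^2 := by ring
          _ = (p:ℤ)^(n+1) * ((p:ℤ) * t) + (-w*y)^2 * ((p:ℤ)^(n+1))^2 := by rw [ht]
          _ = (p:ℤ)^(n+2) * t + ((-w*y)^2 * (p:ℤ)^n) * (p:ℤ)^(n+2) := by ring
      rw [this]
      exact dvd_add ⟨t, by ring⟩ ⟨(-w*y)^2 * (p:ℤ)^n, by ring⟩

/-- Pigeonhole: small solution of `a ≡ u b mod p^k`. -/
lemma aux_pigeon (q p : ℕ) (hp : p.Prime) (k : ℕ) (u : ℤ)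
    (hu : (p:ℤ)^k ∣ u^2 + q) :
    ∃ a b : ℤ, ¬(a = 0 ∧ b = 0) ∧ (p:ℤ)^k ∣ a - u * b ∧
      a^2 + (q:ℤ)*b^2 ≤ ((q:ℤ)+1) * (p:ℤ)^k ∧ (p:ℤ)^k ∣ a^2 + (q:ℤ)*b^2 := by
  set N := p ^ k with hN
  have hN0 : 0 < N := pow_pos hp.pos k
  haveI : NeZero N := ⟨hN0.ne'⟩
  set M := N.sqrt with hM
  have hcard : Fintype.card (ZMod N) < Fintype.card (Fin (M+1) × Fin (M+1)) := by
    rw [ZMod.card, Fintype.card_prod, Fintype.card_fin]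
    exact Nat.lt_succ_sqrt N
  obtain ⟨x, y, hxy, hfeq⟩ := Fintype.exists_ne_map_eq_of_card_lt
    (fun ij : Fin (M+1) × Fin (M+1) =>
      ((ij.1.val : ZMod N) - (u : ZMod N) * (ij.2.val : ZMod N))) hcard
  set a : ℤ := (x.1.val : ℤ) - (y.1.val : ℤ) with ha
  set b : ℤ := (x.2.val : ℤ) - (y.2.val : ℤ) with hb
  have hdvd : (p:ℤ)^k ∣ a - u * b := by
    have h0 : ((a - u * b : ℤ) : ZMod N) = 0 := by
      push_cast
      simp only [ha, hb]
      push_cast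
      linear_combination (hfeq : ((x.1.val : ZMod N) - (u : ZMod N) * (x.2.val : ZMod N)) = _)
    have := (ZMod.intCast_zmod_eq_zero_iff_dvd _ N).mp h0
    have hcast : ((N:ℕ):ℤ) = (p:ℤ)^k := by rw [hN]; push_cast; ring
    rwa [hcast] at this
  have hne : ¬(a = 0 ∧ b = 0) := by
    rintro ⟨ha0, hb0⟩
    apply hxy
    have h1 : x.1 = y.1 := Fin.ext (by exact_mod_cast sub_eq_zero.mp ha0)
    have h2 : x.2 = y.2 := Fin.ext (by exact_mod_cast sub_eq_zero.mp hb0)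
    exact Prod.ext h1 h2
  have hx1 : (x.1.val:ℤ) ≤ M := by exact_mod_cast Nat.lt_succ_iff.mp x.1.isLt
  have hx2 : (x.2.val:ℤ) ≤ M := by exact_mod_cast Nat.lt_succ_iff.mp x.2.isLt
  have hy1 : (y.1.val:ℤ) ≤ M := by exact_mod_cast Nat.lt_succ_iff.mp y.1.isLt
  have hy2 : (y.2.val:ℤ) ≤ M := by exact_mod_cast Nat.lt_succ_iff.mp y.2.isLt
  have hx1' : (0:ℤ) ≤ (x.1.val:ℤ) := Int.natCast_nonneg _
  have hx2' : (0:ℤ) ≤ (x.2.val:ℤ) := Int.natCast_nonneg _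
  have hy1' : (0:ℤ) ≤ (y.1.val:ℤ) := Int.natCast_nonneg _
  have hy2' : (0:ℤ) ≤ (y.2.val:ℤ) := Int.natCast_nonneg _
  have hMN : ((M:ℤ))^2 ≤ (N:ℤ) := by exact_mod_cast Nat.sqrt_le' N
  have hqn : (0:ℤ) ≤ (q:ℤ) := Int.natCast_nonneg _
  have hsa : a^2 ≤ (M:ℤ)^2 := by nlinarith
  have hsb : b^2 ≤ (M:ℤ)^2 := by nlinarith
  have hcastN : ((N:ℕ):ℤ) = (p:ℤ)^k := by rw [hN]; push_cast; ring
  refine ⟨a, b, hne, hdvd, ?_, ?_⟩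
  · rw [← hcastN]; nlinarith
  · have hid : a^2 + (q:ℤ)*b^2 = (a - u*b)*(a + u*b) + (u^2 + (q:ℤ))*b^2 := by ring
    rw [hid]
    exact dvd_add (hdvd.mul_right _) (hu.mul_right _)


/-- Strip common powers of `p` from a pair. -/
lemma aux_strip (q p : ℕ) (hp : p.Prime) (u : ℤ) :
    ∀ n : ℕ, ∀ a b : ℤ, ∀ γ : ℕ, a.natAbs + b.natAbs = n → ¬(a = 0 ∧ b = 0) →
    (p:ℤ)^γ ∣ a - u*b →
    ∃ (a' b' : ℤ) (s : ℕ), ¬((p:ℤ) ∣ a' ∧ (p:ℤ) ∣ b') ∧ ¬(a' = 0 ∧ b' = 0) ∧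
      a^2 + (q:ℤ)*b^2 = (p:ℤ)^(2*s) * (a'^2 + (q:ℤ)*b'^2) ∧
      (p:ℤ)^(γ - s) ∣ a' - u*b' := by
  intro n
  induction n using Nat.strong_induction_on with
  | _ n ih =>
    intro a b γ hn h0 hcong
    by_cases hpd : (p:ℤ) ∣ a ∧ (p:ℤ) ∣ b
    · obtain ⟨⟨a1, rfl⟩, ⟨b1, rfl⟩⟩ := hpd
      have hp0 : (p:ℤ) ≠ 0 := by exact_mod_cast hp.pos.ne'
      have hne : ¬(a1 = 0 ∧ b1 = 0) := by
        rintro ⟨rfl, rfl⟩; exact h0 ⟨by ring, by ring⟩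
      have hlt : a1.natAbs + b1.natAbs < n := by
        have h1 : ((p:ℤ) * a1).natAbs = p * a1.natAbs := by
          rw [Int.natAbs_mul]; simp
        have h2 : ((p:ℤ) * b1).natAbs = p * b1.natAbs := by
          rw [Int.natAbs_mul]; simp
        have hp2 : 2 ≤ p := hp.two_le
        have : a1.natAbs ≠ 0 ∨ b1.natAbs ≠ 0 := by
          rcases not_and_or.mp hne with h | h
          · exact Or.inl (fun hh => h (Int.natAbs_eq_zero.mp hh))
          · exact Or.inr (fun hh => h (Int.natAbs_eq_zero.mp hh))
        rw [h1, h2] at hn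
        have hA : a1.natAbs ≤ p * a1.natAbs := Nat.le_mul_of_pos_left _ hp.pos
        have hB : b1.natAbs ≤ p * b1.natAbs := Nat.le_mul_of_pos_left _ hp.pos
        rcases this with h | h
        · have hs : 1 * a1.natAbs < p * a1.natAbs :=
            (Nat.mul_lt_mul_right (Nat.pos_of_ne_zero h)).mpr hp.one_lt
          omega
        · have hs : 1 * b1.natAbs < p * b1.natAbs :=
            (Nat.mul_lt_mul_right (Nat.pos_of_ne_zero h)).mpr hp.one_lt
          omega
      have hcong1 : (p:ℤ)^(γ-1) ∣ a1 - u*b1 := by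
        rcases Nat.eq_zero_or_pos γ with hγ | hγ
        · simp [hγ]
        · have hsplit : (p:ℤ)^γ = (p:ℤ) * (p:ℤ)^(γ-1) := by
            rw [← pow_succ']
            congr 1
            omega
          have h3 : (p:ℤ) * (p:ℤ)^(γ-1) ∣ (p:ℤ) * (a1 - u*b1) := by
            rw [← hsplit]
            have : (p:ℤ) * a1 - u * ((p:ℤ) * b1) = (p:ℤ) * (a1 - u*b1) := by ring
            rwa [this] at hcong
          exact (mul_dvd_mul_iff_left hp0).mp h3
      obtain ⟨a', b', s, h1, h2, h3, h4⟩ := ih _ hlt a1 b1 (γ-1) rfl hne hcong1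
      refine ⟨a', b', s+1, h1, h2, ?_, ?_⟩
      · have : ((p:ℤ)*a1)^2 + (q:ℤ)*((p:ℤ)*b1)^2 = (p:ℤ)^2 * (a1^2 + (q:ℤ)*b1^2) := by ring
        rw [this, h3, ← mul_assoc, ← pow_add]
        congr 2
        omega
      · have : γ - (s+1) = (γ - 1) - s := by omega
        rwa [this]
    · refine ⟨a, b, 0, hpd, h0, by ring_nf, by simpa using hcong⟩

/-- For every bound `B` we can find a data packet with `p`-exponent at least `B`. -/
lemma aux_data (q p : ℕ) (hq : q.Prime) (hp : p.Prime) (hpodd : Odd p) (hpq : p ≠ q)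
    (u0 : ℤ) (hd : (p:ℤ) ∣ u0^2 + q) (hnd : ¬ (p:ℤ) ∣ u0) (B : ℕ) :
    ∃ (a b u : ℤ) (m e γ : ℕ), B ≤ e ∧ γ ≤ e ∧ 0 < m ∧ ¬ p ∣ m ∧ m ≤ q+1 ∧
      a^2+(q:ℤ)*b^2 = (m:ℤ) * (p:ℤ)^e ∧ (p:ℤ) ∣ (u - u0) ∧ (p:ℤ)^γ ∣ u^2+q ∧
      (p:ℤ)^γ ∣ (a - u*b) ∧ ¬((p:ℤ) ∣ a ∧ (p:ℤ) ∣ b) := by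
  set L := q + 1 with hL
  set k := 2*B + L + 1 with hk
  obtain ⟨u, hu1, hu2⟩ := aux_hensel q p hp hpodd u0 hd hnd (2*B + L)
  have hu2' : (p:ℤ)^k ∣ u^2 + q := by rwa [hk]
  obtain ⟨a, b, hab0, hcong, hbound, hvdvd⟩ := aux_pigeon q p hp k u hu2'
  obtain ⟨a', b', s, hprim, hne', hval, hcong'⟩ :=
    aux_strip q p hp u (a.natAbs + b.natAbs) a b k rfl hab0 hcong
  -- the value of the reduced pair
  set v' : ℤ := a'^2 + (q:ℤ)*b'^2 with hv'
  have hq0 : (0:ℤ) ≤ (q:ℤ) := Int.natCast_nonneg _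
  have hq1 : (1:ℤ) ≤ (q:ℤ) := by exact_mod_cast hq.pos
  have hv'pos : 0 < v' := by
    rcases not_and_or.mp hne' with h | h
    · have h2 : 0 < a'^2 := by positivity
      nlinarith [sq_nonneg b']
    · have h2 : 0 < b'^2 := by positivity
      nlinarith [sq_nonneg a']
  set n := v'.toNat with hnn
  have hncast : (n:ℤ) = v' := Int.toNat_of_nonneg hv'pos.le
  have hn0 : n ≠ 0 := by
    intro h
    rw [h] at hncast
    omega
  set e := n.factorization p with he
  set m := n / p^e with hm
  have hfac : p^e * m = n := Nat.ordProj_mul_ordCompl_eq_self n p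
  have hmp : ¬ p ∣ m := Nat.not_dvd_ordCompl hp hn0
  have hm0 : 0 < m := Nat.ordCompl_pos p hn0
  set γ := k - s with hγ
  have hγk : γ ≤ k := Nat.sub_le _ _
  have hu2γ : (p:ℤ)^γ ∣ u^2+q := (pow_dvd_pow _ hγk).trans hu2'
  have hγv : (p:ℤ)^γ ∣ v' := by
    have hid : v' = (a' - u*b')*(a' + u*b') + (u^2+(q:ℤ))*b'^2 := by rw [hv']; ring
    rw [hid]
    exact dvd_add (hcong'.mul_right _) (hu2γ.mul_right _)
  have hγn : p^γ ∣ n := by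
    have h1 : ((p^γ : ℕ):ℤ) ∣ (n:ℤ) := by push_cast; rwa [hncast]
    exact_mod_cast h1
  have hγe : γ ≤ e := (Nat.Prime.pow_dvd_iff_le_factorization hp hn0).mp hγn
  have hvle : (p:ℤ)^(2*s) * (n:ℤ) ≤ ((q:ℤ)+1) * (p:ℤ)^k := by
    rw [hncast, ← hval]
    exact hbound
  have hvleN : p^(2*s) * n ≤ (q+1) * p^k := by exact_mod_cast hvle
  have hppos : 0 < p := hp.pos
  have h2s : 2*s < L + k := by
    have h1 : p^(2*s) ≤ (q+1) * p^k := by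
      have h0 : p^(2*s) * 1 ≤ p^(2*s) * n := Nat.mul_le_mul_left _ (by omega)
      simpa using h0.trans hvleN
    have h2 : q+1 < p^L := by
      calc q+1 < 2^(q+1) := Nat.lt_two_pow_self
        _ ≤ p^L := Nat.pow_le_pow_left hp.two_le _
    have h3 : p^(2*s) < p^L * p^k :=
      lt_of_le_of_lt h1 ((Nat.mul_lt_mul_right (pow_pos hppos _)).mpr h2)
    rw [← pow_add] at h3
    exact (Nat.pow_lt_pow_iff_right hp.one_lt).mp h3
  have hsk : s ≤ B + L := by omega
  have hγB : B + 1 ≤ γ := by omega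
  have hek : k ≤ e + 2*s := by omega
  have hmle : m ≤ q + 1 := by
    have h1 : m * p^k ≤ m * p^(e+2*s) := Nat.mul_le_mul_left _ (Nat.pow_le_pow_right hppos hek)
    have h2 : m * p^(e+2*s) = p^(2*s) * n := by rw [pow_add, ← hfac]; ring
    have h3 : m * p^k ≤ (q+1) * p^k := by
      rw [h2] at h1
      exact h1.trans hvleN
    exact Nat.le_of_mul_le_mul_right h3 (pow_pos hppos _)
  have heq : a'^2 + (q:ℤ)*b'^2 = (m:ℤ) * (p:ℤ)^e := by
    have h1 : (n:ℤ) = (m:ℤ)*(p:ℤ)^e := by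
      have h2 : n = m * p^e := by rw [← hfac]; ring
      exact_mod_cast h2
    rw [← hv', ← hncast, h1]
  exact ⟨a', b', u, m, e, γ, by omega, hγe, hm0, hmp, hmle, heq, hu1, hu2γ, hcong', hprim⟩

/-- Two `p`-primitive representations with proportional coordinates are impossible. -/
lemma aux_prop_contra (q p : ℕ) (hq : q.Prime) (hp : p.Prime)
    (a b c d : ℤ) (m e f : ℕ) (hm0 : 0 < m) (hef : e < f)
    (heq1 : a^2+(q:ℤ)*b^2 = (m:ℤ)*(p:ℤ)^e)
    (heq2 : c^2+(q:ℤ)*d^2 = (m:ℤ)*(p:ℤ)^f)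
    (hpa : ¬((p:ℤ)∣a ∧ (p:ℤ)∣b)) (hpc : ¬((p:ℤ)∣c ∧ (p:ℤ)∣d))
    (hprop : a*d = b*c) : False := by
  have hP : Prime (p:ℤ) := Nat.prime_iff_prime_int.mp hp
  have hq1 : (1:ℤ) ≤ (q:ℤ) := by exact_mod_cast hq.pos
  have hm0' : (0:ℤ) < (m:ℤ) := by exact_mod_cast hm0
  have hppos : (0:ℤ) < (p:ℤ) := by exact_mod_cast hp.pos
  have hsplit : (p:ℤ)^f = (p:ℤ)^e * (p:ℤ)^(f-e) := by
    rw [← pow_add]; congr 1; omega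
  have hpfe : (p:ℤ) ∣ (p:ℤ)^(f-e) := dvd_pow_self _ (by omega)
  by_cases ha0 : a = 0
  · -- then b ≠ 0, c = 0
    subst ha0
    have hb0 : b ≠ 0 := by
      intro h; exact hpa ⟨dvd_zero _, h ▸ dvd_zero _⟩
    have hc0 : c = 0 := by
      have := hprop.symm
      simp at this
      rcases this with h | h
      · exact absurd h hb0
      · exact h
    subst hc0
    -- q b² = m p^e, q d² = m p^f  ⇒  b² p^(f-e) = d²
    have h1 : (q:ℤ)*b^2 = (m:ℤ)*(p:ℤ)^e := by linarith [heq1]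
    have h2 : (q:ℤ)*d^2 = (m:ℤ)*(p:ℤ)^f := by linarith [heq2]
    have h3 : (q:ℤ)*d^2 = (q:ℤ)*b^2 * (p:ℤ)^(f-e) := by
      rw [h2, hsplit, h1]; ring
    have h4 : d^2 = b^2 * (p:ℤ)^(f-e) := by
      have hqne : (q:ℤ) ≠ 0 := by linarith
      apply mul_left_cancel₀ hqne
      linarith [h3]
    have h5 : (p:ℤ) ∣ d^2 := h4 ▸ (hpfe.mul_left _)
    have h6 : (p:ℤ) ∣ d := hP.dvd_of_dvd_pow h5
    exact hpc ⟨dvd_zero _, h6⟩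
  · set g : ℤ := (Int.gcd a b : ℤ) with hg
    have hgpos : 0 < Int.gcd a b := Int.gcd_pos_of_ne_zero_left b ha0
    have hg0 : g ≠ 0 := by
      rw [hg]; exact_mod_cast hgpos.ne'
    have hga : g ∣ a := Int.gcd_dvd_left a b
    have hgb : g ∣ b := Int.gcd_dvd_right a b
    set a₀ := a / g with ha₀
    set b₀ := b / g with hb₀
    have haa : a = g * a₀ := (Int.mul_ediv_cancel' hga).symm
    have hbb : b = g * b₀ := (Int.mul_ediv_cancel' hgb).symm
    have hcop : IsCoprime a₀ b₀ := by
      rw [Int.isCoprime_iff_gcd_eq_one]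
      exact Int.gcd_div_gcd_div_gcd hgpos
    have ha₀0 : a₀ ≠ 0 := by
      intro h
      rw [h, mul_zero] at haa
      exact ha0 haa
    have hprop' : a₀ * d = b₀ * c := by
      apply mul_left_cancel₀ hg0
      calc g * (a₀ * d) = (g * a₀) * d := by ring
        _ = a * d := by rw [← haa]
        _ = b * c := hprop
        _ = (g * b₀) * c := by rw [← hbb]
        _ = g * (b₀ * c) := by ring
    have hdvdc : a₀ ∣ c := by
      have h1 : a₀ ∣ b₀ * c := ⟨d, by linarith [hprop']⟩
      exact hcop.dvd_of_dvd_mul_left h1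
    obtain ⟨w, hw⟩ := hdvdc
    have hdw : d = b₀ * w := by
      have h1 : a₀ * d = a₀ * (b₀ * w) := by
        rw [hprop', hw]; ring
      exact mul_left_cancel₀ ha₀0 h1
    set V : ℤ := a₀^2 + (q:ℤ)*b₀^2 with hV
    have hVpos : 0 < V := by
      have : 0 < a₀^2 := by positivity
      nlinarith [sq_nonneg b₀]
    have hE1 : g^2 * V = (m:ℤ)*(p:ℤ)^e := by
      rw [← heq1, haa, hbb, hV]; ring
    have hE2 : w^2 * V = (m:ℤ)*(p:ℤ)^f := by
      rw [← heq2, hw, hdw, hV]; ring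
    have hcross : w^2 * V * (p:ℤ)^e = g^2 * V * (p:ℤ)^e * (p:ℤ)^(f-e) := by
      rw [hE2, hE1, hsplit]; ring
    have hw2 : w^2 = g^2 * (p:ℤ)^(f-e) := by
      have hne : V * (p:ℤ)^e ≠ 0 := by positivity
      apply mul_right_cancel₀ hne
      calc w^2 * (V * (p:ℤ)^e) = w^2 * V * (p:ℤ)^e := by ring
        _ = g^2 * V * (p:ℤ)^e * (p:ℤ)^(f-e) := hcross
        _ = g^2 * (p:ℤ)^(f-e) * (V * (p:ℤ)^e) := by ring
    have hpw : (p:ℤ) ∣ w := by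
      apply hP.dvd_of_dvd_pow (n := 2)
      rw [hw2]
      exact (hpfe.mul_left _)
    exact hpc ⟨hw ▸ hpw.mul_left _, hdw ▸ hpw.mul_left _⟩

/-- The division/composition step. -/
lemma aux_divstep (q p : ℕ) (hq : q.Prime) (hp : p.Prime) (hpodd : Odd p)
    (u0 : ℤ) (hnd : ¬ (p:ℤ) ∣ u0)
    (a b u c d u' : ℤ) (m e f γ δ : ℕ)
    (hγe : γ ≤ e) (hδf : δ ≤ f) (hef : e < f)
    (hm0 : 0 < m) (hmp : ¬ p ∣ m)
    (heq1 : a^2+(q:ℤ)*b^2 = (m:ℤ)*(p:ℤ)^e)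
    (heq2 : c^2+(q:ℤ)*d^2 = (m:ℤ)*(p:ℤ)^f)
    (hu1 : (p:ℤ) ∣ u - u0) (hu'1 : (p:ℤ) ∣ u' - u0)
    (hu2 : (p:ℤ)^γ ∣ u^2+q) (hu'2 : (p:ℤ)^δ ∣ u'^2+q)
    (hc1 : (p:ℤ)^γ ∣ a - u*b) (hc2 : (p:ℤ)^δ ∣ c - u'*d)
    (hpa : ¬((p:ℤ)∣a ∧ (p:ℤ)∣b)) (hpc : ¬((p:ℤ)∣c ∧ (p:ℤ)∣d))
    (hmod1 : (m:ℤ) ∣ a - c) (hmod2 : (m:ℤ) ∣ b - d) :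
    ∃ (α β : ℤ) (G : ℕ), 1 ≤ G ∧ β ≠ 0 ∧ α^2 + (q:ℤ)*β^2 = (p:ℤ)^G := by
  have hP : Prime (p:ℤ) := Nat.prime_iff_prime_int.mp hp
  set γ' := min γ δ with hγ'
  have hγ'γ : γ' ≤ γ := min_le_left _ _
  have hγ'δ : γ' ≤ δ := min_le_right _ _
  have hc1' : (p:ℤ)^γ' ∣ a - u*b := (pow_dvd_pow _ hγ'γ).trans hc1
  have hc2' : (p:ℤ)^γ' ∣ c - u'*d := (pow_dvd_pow _ hγ'δ).trans hc2
  have hu2' : (p:ℤ)^γ' ∣ u^2+q := (pow_dvd_pow _ hγ'γ).trans hu2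
  have hu'2' : (p:ℤ)^γ' ∣ u'^2+q := (pow_dvd_pow _ hγ'δ).trans hu'2
  -- p^γ' ∣ u - u'
  have hpuu : ¬ (p:ℤ) ∣ (u + u') := by
    intro h
    have h1 : (p:ℤ) ∣ 2*u0 := by
      have h2 : 2*u0 = (u + u') - ((u - u0) + (u' - u0)) := by ring
      rw [h2]
      exact dvd_sub h (dvd_add hu1 hu'1)
    rcases hP.dvd_mul.mp h1 with h | h
    · have h2 : p ∣ 2 := by exact_mod_cast h
      have := (Nat.prime_dvd_prime_iff_eq hp Nat.prime_two).mp h2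
      subst this
      simp [Nat.odd_iff] at hpodd
    · exact hnd h
  have huu' : (p:ℤ)^γ' ∣ u - u' := by
    have h1 : (p:ℤ)^γ' ∣ (u - u')*(u + u') := by
      have h2 : (u - u')*(u + u') = (u^2+(q:ℤ)) - (u'^2+(q:ℤ)) := by ring
      rw [h2]
      exact dvd_sub hu2' hu'2'
    have hco : IsCoprime ((p:ℤ)^γ') (u + u') :=
      IsCoprime.pow_left ((hP.coprime_iff_not_dvd).mpr hpuu)
    exact hco.dvd_of_dvd_mul_right h1
  -- divisibilities by p^γ'
  have div1 : (p:ℤ)^γ' ∣ a*d - b*c := by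
    have hid : a*d - b*c = (a - u*b)*d - (c - u'*d)*b + (u - u')*(b*d) := by ring
    rw [hid]
    exact dvd_add (dvd_sub (hc1'.mul_right _) (hc2'.mul_right _)) (huu'.mul_right _)
  have div2 : (p:ℤ)^γ' ∣ a*c + (q:ℤ)*(b*d) := by
    have hid : a*c + (q:ℤ)*(b*d)
        = (a - u*b)*c + (u*b)*(c - u'*d) + (u*(u' - u))*(b*d) + (u^2+(q:ℤ))*(b*d) := by ring
    rw [hid]
    have huu'' : (p:ℤ)^γ' ∣ u' - u := by
      have h3 := dvd_neg.mpr huu'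
      rwa [neg_sub] at h3
    exact dvd_add (dvd_add (dvd_add (hc1'.mul_right _) (hc2'.mul_left _))
      ((huu''.mul_left u).mul_right _)) (hu2'.mul_right _)
  -- divisibilities by m
  have div1m : (m:ℤ) ∣ a*d - b*c := by
    have hid : a*d - b*c = (-a)*(b - d) + b*(a - c) := by ring
    rw [hid]
    exact dvd_add (hmod2.mul_left _) (hmod1.mul_left _)
  have div2m : (m:ℤ) ∣ a*c + (q:ℤ)*(b*d) := by
    have hid : a*c + (q:ℤ)*(b*d) = (-a)*(a - c) + (-(q:ℤ)*b)*(b - d) + (m:ℤ)*(p:ℤ)^e := by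
      rw [← heq1]; ring
    rw [hid]
    exact dvd_add (dvd_add (hmod1.mul_left _) (hmod2.mul_left _)) (Dvd.intro _ rfl)
  -- combine
  have hmpZ : ¬ (p:ℤ) ∣ (m:ℤ) := by
    intro h
    exact hmp (by exact_mod_cast h)
  have hcoMP : IsCoprime ((m:ℤ)) ((p:ℤ)^γ') :=
    (IsCoprime.pow_left ((hP.coprime_iff_not_dvd).mpr hmpZ)).symm
  obtain ⟨α, hα⟩ := hcoMP.mul_dvd div2m div2
  obtain ⟨β, hβ⟩ := hcoMP.mul_dvd div1m div1
  set G := e + f - 2*γ' with hG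
  have hγ'e : γ' ≤ e := hγ'γ.trans hγe
  have hG1 : 1 ≤ G := by omega
  have hkey : (a*c + (q:ℤ)*(b*d))^2 + (q:ℤ)*(a*d - b*c)^2
      = (a^2+(q:ℤ)*b^2) * (c^2+(q:ℤ)*d^2) := by ring
  have hpow : (p:ℤ)^(e+f) = (p:ℤ)^(2*γ') * (p:ℤ)^G := by
    rw [← pow_add]; congr 1; omega
  have hmain : ((m:ℤ)*(p:ℤ)^γ')^2 * (α^2 + (q:ℤ)*β^2) = ((m:ℤ)*(p:ℤ)^γ')^2 * (p:ℤ)^G := by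
    have h1 : ((m:ℤ)*(p:ℤ)^γ')^2 * (α^2 + (q:ℤ)*β^2)
        = (a*c + (q:ℤ)*(b*d))^2 + (q:ℤ)*(a*d - b*c)^2 := by rw [hα, hβ]; ring
    rw [h1, hkey, heq1, heq2]
    calc (m:ℤ)*(p:ℤ)^e * ((m:ℤ)*(p:ℤ)^f) = (m:ℤ)^2 * (p:ℤ)^(e+f) := by rw [pow_add]; ring
      _ = ((m:ℤ)*(p:ℤ)^γ')^2 * (p:ℤ)^G := by rw [hpow]; ring
  have hmne : ((m:ℤ)*(p:ℤ)^γ')^2 ≠ 0 := by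
    have h1 : (0:ℤ) < (m:ℤ) := by exact_mod_cast hm0
    have h2 : (0:ℤ) < (p:ℤ) := by exact_mod_cast hp.pos
    positivity
  have heqfin : α^2 + (q:ℤ)*β^2 = (p:ℤ)^G := mul_left_cancel₀ hmne hmain
  have hβ0 : β ≠ 0 := by
    intro h
    rw [h, mul_zero] at hβ
    exact aux_prop_contra q p hq hp a b c d m e f hm0 hef heq1 heq2 hpa hpc (by linarith [hβ])
  exact ⟨α, β, G, hG1, hβ0, heqfin⟩

/-- Remove common `p`-factors from a representation of a `p`-power. -/
lemma aux_reduce (q p : ℕ) (hq2 : 2 ≤ q) (hp : p.Prime) :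
    ∀ n : ℕ, ∀ α β : ℤ, ∀ G : ℕ, α.natAbs + β.natAbs = n → β ≠ 0 →
    α^2 + (q:ℤ)*β^2 = (p:ℤ)^G →
    ∃ (α' β' : ℤ) (E : ℕ), 1 ≤ E ∧ ¬((p:ℤ)∣α' ∧ (p:ℤ)∣β') ∧
      α'^2 + (q:ℤ)*β'^2 = (p:ℤ)^E := by
  intro n
  induction n using Nat.strong_induction_on with
  | _ n ih =>
    intro α β G hn hβ heq
    by_cases hpd : (p:ℤ) ∣ α ∧ (p:ℤ) ∣ β
    · obtain ⟨⟨α1, rfl⟩, ⟨β1, rfl⟩⟩ := hpd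
      have hp0 : (p:ℤ) ≠ 0 := by exact_mod_cast hp.pos.ne'
      have hβ1 : β1 ≠ 0 := by
        rintro rfl
        exact hβ (by ring)
      have hdvd : (p:ℤ)^2 ∣ (p:ℤ)^G := by
        rw [← heq]
        have h1 : ((p:ℤ)*α1)^2 + (q:ℤ)*((p:ℤ)*β1)^2 = (p:ℤ)^2 * (α1^2+(q:ℤ)*β1^2) := by ring
        rw [h1]
        exact Dvd.intro _ rfl
      have hG2 : 2 ≤ G := by
        have h1 : p^2 ∣ p^G := by exact_mod_cast hdvd
        exact (Nat.pow_dvd_pow_iff_le_right hp.one_lt).mp h1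
      have heq' : α1^2 + (q:ℤ)*β1^2 = (p:ℤ)^(G-2) := by
        have h1 : (p:ℤ)^G = (p:ℤ)^2 * (p:ℤ)^(G-2) := by
          rw [← pow_add]; congr 1; omega
        have h2 : (p:ℤ)^2 * (α1^2+(q:ℤ)*β1^2) = (p:ℤ)^2 * (p:ℤ)^(G-2) := by
          rw [← h1, ← heq]; ring
        exact mul_left_cancel₀ (pow_ne_zero 2 hp0) h2
      have hlt : α1.natAbs + β1.natAbs < n := by
        have h1 : ((p:ℤ) * α1).natAbs = p * α1.natAbs := by rw [Int.natAbs_mul]; simp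
        have h2 : ((p:ℤ) * β1).natAbs = p * β1.natAbs := by rw [Int.natAbs_mul]; simp
        rw [h1, h2] at hn
        have hA : α1.natAbs ≤ p * α1.natAbs := Nat.le_mul_of_pos_left _ hp.pos
        have hs : 1 * β1.natAbs < p * β1.natAbs :=
          (Nat.mul_lt_mul_right (Nat.pos_of_ne_zero (fun hh => hβ1 (Int.natAbs_eq_zero.mp hh)))).mpr hp.one_lt
        omega
      exact ih _ hlt α1 β1 (G-2) rfl hβ1 heq'
    · refine ⟨α, β, G, ?_, hpd, heq⟩
      by_contra hG
      have hG0 : G = 0 := by omega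
      rw [hG0, pow_zero] at heq
      have h1 : (1:ℤ) ≤ β^2 := by
        have h2 : 1 ≤ |β| := Int.one_le_abs (by exact_mod_cast hβ)
        nlinarith [sq_abs β]
      have hq2' : (2:ℤ) ≤ (q:ℤ) := by exact_mod_cast hq2
      nlinarith [sq_nonneg α]

end Aux

/-- If `q` is an odd prime and `p` is a `q`-appropriate prime (odd, `p ≠ q`, and `−q` a square
mod `p`), then there is a primitive solution `a² + q·b² = p^(2k)` with `k ≥ 1` and
`gcd(a, b, p) = 1`; consequently `X² + qY² = 1` has a solution in `ℤ[1/p]` with `Y ≠ 0`. -/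
theorem appropriate_prime_gives_solution
    (q p : ℕ) (hq : q.Prime) (hqodd : Odd q)
    (hp : p.Prime) (hpodd : Odd p) (hpq : p ≠ q)
    (hres : IsSquare (-(q : ZMod p))) :
    (∃ (a b : ℤ) (k : ℕ), 1 ≤ k ∧ Nat.gcd (Nat.gcd a.natAbs b.natAbs) p = 1 ∧
        a ^ 2 + (q : ℤ) * b ^ 2 = (p : ℤ) ^ (2 * k)) ∧
    (∃ x y : ℚ, (∃ (m : ℤ) (j : ℕ), x = (m : ℚ) / (p : ℚ) ^ j) ∧
        (∃ (m : ℤ) (j : ℕ), y = (m : ℚ) / (p : ℚ) ^ j) ∧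
        x ^ 2 + (q : ℚ) * y ^ 2 = 1 ∧ y ≠ 0) := by
  classical
  have hq2 : 2 ≤ q := hq.two_le
  have hP : Prime (p:ℤ) := Nat.prime_iff_prime_int.mp hp
  haveI : Fact p.Prime := ⟨hp⟩
  -- square root of -q mod p
  obtain ⟨r, hr⟩ := hres
  set u0 : ℤ := (r.val : ℤ) with hu0
  have hru : ((u0 : ℤ) : ZMod p) = r := by
    rw [hu0]
    push_cast
    exact ZMod.natCast_rightInverse r
  have hd : (p:ℤ) ∣ u0^2 + q := by
    have h0 : ((u0^2 + q : ℤ) : ZMod p) = 0 := by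
      push_cast
      rw [hru, sq, ← hr]
      ring
    exact (ZMod.intCast_zmod_eq_zero_iff_dvd _ p).mp h0
  have hnd : ¬ (p:ℤ) ∣ u0 := by
    intro h
    have h0 : ((u0:ℤ) : ZMod p) = 0 := (ZMod.intCast_zmod_eq_zero_iff_dvd _ p).mpr h
    rw [hru] at h0
    rw [h0, mul_zero, neg_eq_zero] at hr
    have h1 : p ∣ q := (ZMod.natCast_eq_zero_iff _ p).mp hr
    exact hpq ((Nat.prime_dvd_prime_iff_eq hp hq).mp h1)
  -- data packets
  have hdata := aux_data q p hq hp hpodd hpq u0 hd hnd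
  choose a b u m e γ hBe hγe hm0 hmp hmq heq hu1 hu2 hcong hprim using hdata
  have hmlt : ∀ B, m B < q + 2 := fun B => by have := hmq B; omega
  have hmne : ∀ B, ((m B : ℤ)) ≠ 0 := fun B => by
    have := hm0 B; exact_mod_cast (hm0 B).ne'
  have hresa : ∀ B, ((a B) % (m B : ℤ)).toNat < q + 2 := by
    intro B
    have h1 : (0:ℤ) < (m B : ℤ) := by exact_mod_cast hm0 B
    have h2 := Int.emod_nonneg (a B) (hmne B)
    have h3 := Int.emod_lt_of_pos (a B) h1
    have h4 := hmq B
    have h5 : ((m B : ℕ) : ℤ) ≤ ((q:ℤ) + 1) := by exact_mod_cast h4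
    omega
  have hresb : ∀ B, ((b B) % (m B : ℤ)).toNat < q + 2 := by
    intro B
    have h1 : (0:ℤ) < (m B : ℤ) := by exact_mod_cast hm0 B
    have h2 := Int.emod_nonneg (b B) (hmne B)
    have h3 := Int.emod_lt_of_pos (b B) h1
    have h4 := hmq B
    have h5 : ((m B : ℕ) : ℤ) ≤ ((q:ℤ) + 1) := by exact_mod_cast h4
    omega
  set attr : ℕ → Fin (q+2) × Fin (q+2) × Fin (q+2) := fun B =>
    (⟨m B % (q+2), Nat.mod_lt _ (by omega)⟩,
     ⟨((a B) % (m B : ℤ)).toNat, hresa B⟩,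
     ⟨((b B) % (m B : ℤ)).toNat, hresb B⟩) with hattr
  obtain ⟨y, hy⟩ := Finite.exists_infinite_fiber attr
  have hSinf : (attr ⁻¹' {y}).Infinite := Set.infinite_coe_iff.mp hy
  obtain ⟨B₁, hB₁⟩ := hSinf.nonempty
  obtain ⟨B₂, hB₂, hB₂gt⟩ := hSinf.exists_gt (e B₁)
  have hef : e B₁ < e B₂ := lt_of_lt_of_le hB₂gt (hBe B₂)
  have heq12 : attr B₁ = attr B₂ := by
    rw [Set.mem_preimage, Set.mem_singleton_iff] at hB₁ hB₂
    rw [hB₁, hB₂]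
  have hm12 : m B₁ = m B₂ := by
    have h1 : (attr B₁).1.val = (attr B₂).1.val := by rw [heq12]
    simp only [hattr] at h1
    rwa [Nat.mod_eq_of_lt (hmlt B₁), Nat.mod_eq_of_lt (hmlt B₂)] at h1
  have hmoda : (m B₁ : ℤ) ∣ a B₁ - a B₂ := by
    have h1 : (attr B₁).2.1.val = (attr B₂).2.1.val := by rw [heq12]
    simp only [hattr] at h1
    have h2 : ((a B₁) % (m B₁ : ℤ)) = ((a B₂) % (m B₂ : ℤ)) := by
      have h3 := congrArg (fun t : ℕ => (t : ℤ)) h1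
      rwa [Int.toNat_of_nonneg (Int.emod_nonneg _ (hmne B₁)),
        Int.toNat_of_nonneg (Int.emod_nonneg _ (hmne B₂))] at h3
    rw [hm12]
    have h4 : a B₂ ≡ a B₁ [ZMOD (m B₂ : ℤ)] := by
      rw [Int.ModEq]
      rw [← hm12, h2, hm12]
    exact h4.dvd
  have hmodb : (m B₁ : ℤ) ∣ b B₁ - b B₂ := by
    have h1 : (attr B₁).2.2.val = (attr B₂).2.2.val := by rw [heq12]
    simp only [hattr] at h1
    have h2 : ((b B₁) % (m B₁ : ℤ)) = ((b B₂) % (m B₂ : ℤ)) := by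
      have h3 := congrArg (fun t : ℕ => (t : ℤ)) h1
      rwa [Int.toNat_of_nonneg (Int.emod_nonneg _ (hmne B₁)),
        Int.toNat_of_nonneg (Int.emod_nonneg _ (hmne B₂))] at h3
    rw [hm12]
    have h4 : b B₂ ≡ b B₁ [ZMOD (m B₂ : ℤ)] := by
      rw [Int.ModEq]
      rw [← hm12, h2, hm12]
    exact h4.dvd
  have heqB2 : (a B₂)^2+(q:ℤ)*(b B₂)^2 = ((m B₁ : ℕ):ℤ) * (p:ℤ)^(e B₂) := by
    rw [hm12]; exact heq B₂
  obtain ⟨α, β, G, hG1, hβ0, heqG⟩ :=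
    aux_divstep q p hq hp hpodd u0 hnd (a B₁) (b B₁) (u B₁) (a B₂) (b B₂) (u B₂)
      (m B₁) (e B₁) (e B₂) (γ B₁) (γ B₂) (hγe B₁) (hγe B₂) hef (hm0 B₁) (hmp B₁)
      (heq B₁) heqB2 (hu1 B₁) (hu1 B₂) (hu2 B₁) (hu2 B₂) (hcong B₁) (hcong B₂)
      (hprim B₁) (hprim B₂) hmoda hmodb
  obtain ⟨α', β', E, hE1, hprim', heqE⟩ :=
    aux_reduce q p hq2 hp (α.natAbs + β.natAbs) α β G rfl hβ0 heqG
  -- assemble part 1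
  set A : ℤ := α'^2 - (q:ℤ)*β'^2 with hA
  set Bb : ℤ := 2*α'*β' with hBb
  have heqn : A^2 + (q:ℤ)*Bb^2 = (p:ℤ)^(2*E) := by
    have h1 : A^2 + (q:ℤ)*Bb^2 = (α'^2 + (q:ℤ)*β'^2)^2 := by rw [hA, hBb]; ring
    rw [h1, heqE, ← pow_mul, mul_comm E 2]
  have hnotboth : ¬((p:ℤ) ∣ A ∧ (p:ℤ) ∣ Bb) := by
    rintro ⟨h1, h2⟩
    rcases hP.dvd_mul.mp h2 with h3 | h3
    · rcases hP.dvd_mul.mp h3 with h4 | h4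
      · have h5 : p ∣ 2 := by exact_mod_cast h4
        have := (Nat.prime_dvd_prime_iff_eq hp Nat.prime_two).mp h5
        subst this
        simp [Nat.odd_iff] at hpodd
      · have h5 : (p:ℤ) ∣ (q:ℤ)*β'^2 := by
          have h6 : (q:ℤ)*β'^2 = α'^2 - A := by rw [hA]; ring
          rw [h6]
          exact dvd_sub (dvd_pow h4 two_ne_zero) h1
        rcases hP.dvd_mul.mp h5 with h6 | h6
        · have h7 : p ∣ q := by exact_mod_cast h6
          exact hpq ((Nat.prime_dvd_prime_iff_eq hp hq).mp h7)
        · exact hprim' ⟨h4, hP.dvd_of_dvd_pow h6⟩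
    · have h5 : (p:ℤ) ∣ α'^2 := by
        have h6 : α'^2 = A + (q:ℤ)*β'^2 := by rw [hA]; ring
        rw [h6]
        exact dvd_add h1 ((dvd_pow h3 two_ne_zero).mul_left _)
      exact hprim' ⟨hP.dvd_of_dvd_pow h5, h3⟩
  have hcastdvd : ∀ X : ℤ, p ∣ X.natAbs → (p:ℤ) ∣ X := by
    intro X hX
    exact Int.natAbs_dvd_natAbs.mp (by simpa using hX)
  have hgcd : Nat.gcd (Nat.gcd A.natAbs Bb.natAbs) p = 1 := by
    rcases Nat.coprime_or_dvd_of_prime hp (Nat.gcd A.natAbs Bb.natAbs) with h | h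
    · exact h.symm
    · exfalso
      apply hnotboth
      exact ⟨hcastdvd A (h.trans (Nat.gcd_dvd_left _ _)),
        hcastdvd Bb (h.trans (Nat.gcd_dvd_right _ _))⟩
  constructor
  · exact ⟨A, Bb, E, hE1, hgcd, heqn⟩
  · -- part 2
    have hpQ : ((p:ℚ))^E ≠ 0 := by
      have : (0:ℚ) < (p:ℚ) := by exact_mod_cast hp.pos
      positivity
    refine ⟨(A:ℚ)/(p:ℚ)^E, (Bb:ℚ)/(p:ℚ)^E, ⟨A, E, rfl⟩, ⟨Bb, E, rfl⟩, ?_, ?_⟩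
    · have hcast : (A:ℚ)^2 + (q:ℚ)*(Bb:ℚ)^2 = ((p:ℚ)^E)^2 := by
        have h1 : ((A^2 + (q:ℤ)*Bb^2 : ℤ) : ℚ) = (((p:ℤ)^(2*E) : ℤ) : ℚ) := by
          exact_mod_cast congrArg (fun t : ℤ => (t:ℚ)) heqn
        push_cast at h1
        rw [h1, ← pow_mul, mul_comm E 2]
      field_simp
      linear_combination hcast
    · intro hy0
      have hBb0 : Bb = 0 := by
        have h1 : (Bb:ℚ) = 0 := by
          rcases div_eq_zero_iff.mp hy0 with h | h
          · exact h
          · exact absurd h hpQ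
        exact_mod_cast h1
      rw [hBb0] at heqn
      have hpA : (p:ℤ) ∣ A := by
        apply hP.dvd_of_dvd_pow (n := 2)
        have h1 : A^2 = (p:ℤ)^(2*E) := by linarith [heqn]
        rw [h1]
        exact dvd_pow_self _ (by omega)
      have h1 : p ∣ A.natAbs := by
        have h2 : (p:ℤ).natAbs ∣ A.natAbs := Int.natAbs_dvd_natAbs.mpr hpA
        simpa using h2
      have h2 : p ∣ Nat.gcd (Nat.gcd A.natAbs Bb.natAbs) p := by
        apply Nat.dvd_gcd _ dvd_rfl
        rw [hBb0]
        simpa using Nat.dvd_gcd h1 (dvd_zero p)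
      rw [hgcd] at h2
      have h3 := Nat.le_of_dvd one_pos h2
      have h4 := hp.two_le
      omega
end

section
/- Let 3 = q₀ < q₁ < q₂ < ⋯ enumerate the odd primes. For every natural number e and every finite set I ⊆ ℕ with e ∉ I, there exist infinitely many primes p that are q_e-appropriate but, for every i ∈ I, are not q_i-appropriate. -/
lemma oddSet_infinite : {n : ℕ | n.Prime ∧ Odd n}.Infinite := by
  have h : {n : ℕ | n.Prime} \ {2} ⊆ {n : ℕ | n.Prime ∧ Odd n} := by
    rintro n ⟨h1, h2⟩
    exact ⟨h1, h1.odd_of_ne_two h2⟩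
  exact ((Nat.infinite_setOf_prime.diff (Set.finite_singleton 2))).mono h

lemma coprime_of_modEq' {a r n : ℕ} (h : a ≡ r [MOD n]) (hc : n.Coprime r) : n.Coprime a := by
  have : Nat.gcd n a = Nat.gcd n r := by rw [Nat.gcd_rec n a, Nat.gcd_rec n r, h]
  unfold Nat.Coprime at *
  rw [this]; exact hc

lemma legendre_neg_eq (p q : ℕ) [Fact p.Prime] [Fact q.Prime] (hp4 : p % 4 = 1) (hq2 : q ≠ 2) :
    legendreSym p (-(q : ℤ)) = legendreSym q p := by
  have hp2 : p ≠ 2 := by rintro rfl; norm_num at hp4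
  rw [show (-(q : ℤ)) = -1 * q by ring, legendreSym.mul, legendreSym.at_neg_one hp2,
    ZMod.χ₄_nat_one_mod_four hp4, one_mul,
    ← legendreSym.quadratic_reciprocity_one_mod_four hp4 hq2]

lemma main_iff (p q : ℕ) (hp : p.Prime) (hq : q.Prime) (hq2 : q ≠ 2) (hp4 : p % 4 = 1)
    (hne : p ≠ q) : IsSquare (-(q : ZMod p)) ↔ IsSquare ((p : ZMod q)) := by
  haveI := Fact.mk hp; haveI := Fact.mk hq
  have key := legendre_neg_eq p q hp4 hq2
  have h1 : legendreSym p (-(q : ℤ)) = 1 ↔ IsSquare (-(q : ZMod p)) := by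
    have h0 : ((-(q : ℤ) : ℤ) : ZMod p) = -(q : ZMod p) := by push_cast; ring
    have := legendreSym.eq_one_iff p (a := -(q : ℤ)) (by
      rw [h0]; exact neg_ne_zero.mpr (ZMod.prime_ne_zero p q hne))
    rwa [h0] at this
  have h2 : legendreSym q (p : ℤ) = 1 ↔ IsSquare ((p : ZMod q)) :=
    legendreSym.eq_one_iff' q (ZMod.prime_ne_zero q p (Ne.symm hne))
  rw [← h1, key, h2]



/-- A prime `p` is `q`-appropriate (for an odd prime `q`) if `p` is odd, `p ≠ q`, and
`−q` is a quadratic residue modulo `p`. -/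
def QAppropriate (q p : ℕ) : Prop :=
  p.Prime ∧ Odd p ∧ p ≠ q ∧ IsSquare (-(q : ZMod p))

/-- The increasing enumeration `3 = q₀ < q₁ < ⋯` of the odd primes. -/
noncomputable def oddPrime (e : ℕ) : ℕ := Nat.nth (fun n => n.Prime ∧ Odd n) e

/-- For every `e` and every finite `I ⊆ ℕ` with `e ∉ I`, there are infinitely many primes
that are `q_e`-appropriate but not `q_i`-appropriate for any `i ∈ I`. -/
theorem infinitely_many_selectively_appropriate_primes
    (e : ℕ) (I : Finset ℕ) (heI : e ∉ I) :
    {p : ℕ | QAppropriate (oddPrime e) p ∧ ∀ i ∈ I, ¬ QAppropriate (oddPrime i) p}.Infinite := by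
  classical
  have hinf := oddSet_infinite
  have hq : ∀ i, (oddPrime i).Prime ∧ Odd (oddPrime i) := fun i =>
    Nat.nth_mem_of_infinite hinf i
  have hq2 : ∀ i, oddPrime i ≠ 2 := fun i h => by
    have := (hq i).2; rw [h] at this; exact (by decide : ¬ Odd 2) this
  have hinj : Function.Injective oddPrime := Nat.nth_injective hinf
  -- choose nonsquares
  have hns : ∀ i, ∃ c : ℕ, ¬ IsSquare ((c : ZMod (oddPrime i))) := by
    intro i
    haveI := Fact.mk (hq i).1
    have hchar : ringChar (ZMod (oddPrime i)) ≠ 2 := by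
      rw [ZMod.ringChar_zmod_n]; exact hq2 i
    obtain ⟨x, hx⟩ := FiniteField.exists_nonsquare hchar
    refine ⟨x.val, ?_⟩
    rwa [ZMod.natCast_val, ZMod.cast_id]
  choose b hb using hns
  set r : ℕ → ℕ := fun i => if i = e then 1 else b i with hr
  -- cast of r i is nonzero mod oddPrime i
  have hrne : ∀ i, ((r i : ZMod (oddPrime i))) ≠ 0 := by
    intro i h0
    haveI := Fact.mk (hq i).1
    by_cases hie : i = e
    · simp only [hr] at h0
      rw [if_pos hie] at h0
      norm_num at h0
    · apply hb i
      simp only [hr] at h0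
      rw [if_neg hie] at h0
      rw [h0]
      exact ⟨0, by ring⟩
  have hrcop : ∀ i, (oddPrime i).Coprime (r i) := by
    intro i
    exact ((hq i).1.coprime_iff_not_dvd).mpr fun hdvd =>
      hrne i ((ZMod.natCast_eq_zero_iff _ _).mpr hdvd)
  -- CRT over the finset t = insert e I
  set t : Finset ℕ := insert e I with ht
  have hs0 : ∀ i ∈ t, oddPrime i ≠ 0 := fun i _ => (hq i).1.pos.ne'
  have hpp : Set.Pairwise ↑t (Function.onFun Nat.Coprime oddPrime) := by
    intro i _ j _ hij
    exact (Nat.coprime_primes (hq i).1 (hq j).1).mpr fun h => hij (hinj h)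
  obtain ⟨k, hk⟩ := Nat.chineseRemainderOfFinset r oddPrime t hs0 hpp
  set Q : ℕ := ∏ i ∈ t, oddPrime i with hQ
  have hQ0 : Q ≠ 0 := Finset.prod_ne_zero_iff.mpr fun i hi => hs0 i hi
  have hco8 : Nat.Coprime 8 Q := by
    refine Nat.Coprime.prod_right fun i _ => ?_
    have h2 : Nat.Coprime 2 (oddPrime i) :=
      (Nat.coprime_primes Nat.prime_two (hq i).1).mpr (Ne.symm (hq2 i))
    calc Nat.gcd 8 (oddPrime i) = Nat.gcd (2 ^ 3) (oddPrime i) := by norm_num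
    _ = 1 := Nat.Coprime.pow_left 3 h2
  obtain ⟨K, hK8, hKQ⟩ := Nat.chineseRemainder hco8 1 k
  set N : ℕ := 8 * Q with hN
  haveI : NeZero N := ⟨by positivity⟩
  -- K is congruent to r i mod oddPrime i for i ∈ t
  have hKi : ∀ i ∈ t, K ≡ r i [MOD oddPrime i] := by
    intro i hi
    exact (hKQ.of_dvd (Finset.dvd_prod_of_mem oddPrime hi)).trans (hk i hi)
  -- K is a unit mod N
  have hKcop : Nat.Coprime K N := by
    rw [Nat.coprime_comm]
    refine Nat.Coprime.mul (coprime_of_modEq' hK8 (Nat.coprime_one_right 8)) ?_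
    exact Nat.Coprime.prod_left fun i hi => coprime_of_modEq' (hKi i hi) (hrcop i)
  have hKunit : IsUnit ((K : ZMod N)) := (ZMod.isUnit_iff_coprime K N).mpr hKcop
  have hDir := Nat.infinite_setOfPred_prime_and_eq_mod hKunit
  refine hDir.mono ?_
  rintro p ⟨hp, hpK⟩
  haveI := Fact.mk hp
  have hpmod : p ≡ K [MOD N] := (ZMod.natCast_eq_natCast_iff p K N).mp hpK
  have hp8 : p % 8 = 1 := by
    have h := (hpmod.of_dvd ⟨Q, rfl⟩).trans hK8
    simpa [Nat.ModEq] using h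
  have hp4 : p % 4 = 1 := by
    have := Nat.mod_mod_of_dvd p (by norm_num : 4 ∣ 8)
    omega
  have hpodd : Odd p := by
    rw [Nat.odd_iff]
    have := Nat.mod_mod_of_dvd p (by norm_num : 2 ∣ 8)
    omega
  -- residues of p mod oddPrime i
  have hpi : ∀ i ∈ t, (p : ZMod (oddPrime i)) = (r i : ZMod (oddPrime i)) := by
    intro i hi
    have hd : oddPrime i ∣ N := Dvd.dvd.mul_left (Finset.dvd_prod_of_mem oddPrime hi) 8
    exact (ZMod.natCast_eq_natCast_iff _ _ _).mpr ((hpmod.of_dvd hd).trans (hKi i hi))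
  have hpne : ∀ i ∈ t, p ≠ oddPrime i := by
    intro i hi hpe
    apply hrne i
    rw [← hpi i hi, hpe, ZMod.natCast_self]
  have hiff : ∀ i ∈ t, (IsSquare (-(oddPrime i : ZMod p)) ↔
      IsSquare ((r i : ZMod (oddPrime i)))) := by
    intro i hi
    rw [main_iff p (oddPrime i) hp (hq i).1 (hq2 i) hp4 (hpne i hi), hpi i hi]
  constructor
  · have het : e ∈ t := Finset.mem_insert_self e I
    refine ⟨hp, hpodd, hpne e het, ?_⟩
    rw [hiff e het]
    have h1 : (r e : ZMod (oddPrime e)) = 1 := by simp [hr]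
    rw [h1]
    exact IsSquare.one
  · intro i hi hQA
    have hit : i ∈ t := Finset.mem_insert_of_mem hi
    have hie : i ≠ e := fun h => heI (h ▸ hi)
    have := (hiff i hit).mp hQA.2.2.2
    rw [hr] at this
    simp only [if_neg hie] at this
    exact hb i this
end

section
/- Let q be an odd prime, m = 4q, and n an integer with n ≡ 1 (mod 4) and n a nonzero square modulo q. Then n is coprime to m, and every prime p ≡ n (mod m) is q-appropriate. -/
/-- Let `q` be an odd prime, `m = 4q`, and `n` an integer with `n ≡ 1 (mod 4)` which is a
nonzero square modulo `q`. Then `n` is coprime to `m`, and every prime `p ≡ n (mod m)` is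
`q`-appropriate: `p` is odd, `p ≠ q`, and `−q` is a quadratic residue modulo `p`. -/
theorem primes_in_progression_are_appropriate
    (q : ℕ) (hq : q.Prime) (hqodd : Odd q) (n : ℕ)
    (hn4 : n % 4 = 1) (hnq : (n : ZMod q) ≠ 0 ∧ IsSquare ((n : ZMod q))) :
    Nat.Coprime n (4 * q) ∧
    ∀ p : ℕ, p.Prime → p % (4 * q) = n % (4 * q) →
      (Odd p ∧ p ≠ q ∧ IsSquare (-(q : ZMod p))) := by
  haveI : Fact q.Prime := ⟨hq⟩
  obtain ⟨hnq0, hnqsq⟩ := hnq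
  have hqpos : 0 < q := hq.pos
  constructor
  · rw [Nat.coprime_mul_iff_right]
    constructor
    · -- coprime n 4
      have h2 : Nat.Coprime n 2 := by
        rw [Nat.coprime_comm, Nat.coprime_two_left, Nat.odd_iff]
        omega
      simpa [show (4:ℕ) = 2^2 by norm_num] using h2.pow_right 2
    · -- coprime n q
      rcases Nat.coprime_or_dvd_of_prime hq n with h | h
      · exact h.symm
      · exact absurd ((ZMod.natCast_eq_zero_iff n q).mpr h) hnq0
  · intro p hp hpm
    haveI : Fact p.Prime := ⟨hp⟩
    have hp4 : p % 4 = 1 := by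
      have h1 : p % (4 * q) % 4 = n % (4 * q) % 4 := by rw [hpm]
      rw [Nat.mod_mod_of_dvd _ ⟨q, rfl⟩, Nat.mod_mod_of_dvd _ ⟨q, rfl⟩] at h1
      omega
    have hpq : p % q = n % q := by
      have h1 : p % (4 * q) % q = n % (4 * q) % q := by rw [hpm]
      rwa [Nat.mod_mod_of_dvd _ ⟨4, by ring⟩, Nat.mod_mod_of_dvd _ ⟨4, by ring⟩] at h1
    have hpcast : (p : ZMod q) = (n : ZMod q) := by
      rw [ZMod.natCast_eq_natCast_iff', hpq]
    have hodd : Odd p := by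
      rcases Nat.Prime.eq_two_or_odd hp with h | h
      · omega
      · exact Nat.odd_iff.mpr h
    refine ⟨hodd, ?_, ?_⟩
    · intro h
      apply hnq0
      rw [← hpcast, h]
      exact ZMod.natCast_self q
    · have h1 : IsSquare (-1 : ZMod p) := by
        rw [ZMod.exists_sq_eq_neg_one_iff]
        omega
      have h2 : IsSquare (q : ZMod p) := by
        rw [ZMod.exists_sq_eq_prime_iff_of_mod_four_eq_one hp4 (by rintro rfl; have := Nat.odd_iff.mp hqodd; omega : q ≠ 2)]
        · rwa [hpcast]
      have := h1.mul h2
      simpa using this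
end

section
/- The jump operator A ↦ A′ is not an enumeration operator: there is no Turing functional Γ such that for every set A ⊆ ℕ and every enumeration C of A (a set C with π₁(C) = A), Γ^C is total with values in {0,1} and computes an enumeration of A′. -/
/-- Codes for oracle Turing machines (partial functions recursive in an oracle). -/
inductive OCode : Type
  | zero : OCode
  | succ : OCode
  | left : OCode
  | right : OCode
  | oracle : OCode
  | pair : OCode → OCode → OCode
  | comp : OCode → OCode → OCode
  | prec : OCode → OCode → OCode
  | rfind' : OCode → OCode

namespace OCode

/-- Evaluation of an oracle code with oracle `O : ℕ → ℕ`. -/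
def eval (O : ℕ → ℕ) : OCode → ℕ →. ℕ
  | zero => pure 0
  | succ => fun n => Part.some (n + 1)
  | left => fun n => Part.some n.unpair.1
  | right => fun n => Part.some n.unpair.2
  | oracle => fun n => Part.some (O n)
  | pair cf cg => fun n => Nat.pair <$> eval O cf n <*> eval O cg n
  | comp cf cg => fun n => eval O cg n >>= eval O cf
  | prec cf cg =>
    Nat.unpaired fun a n =>
      n.rec (eval O cf a) fun y IH => do
        let i ← IH
        eval O cg (Nat.pair a (Nat.pair y i))
  | rfind' cf =>
    Nat.unpaired fun a m =>
      (Nat.rfind fun n => (fun m => m = 0) <$> eval O cf (Nat.pair a (n + m))).map (· + m)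

/-- A surjective numbering of oracle codes. -/
def ofNat : ℕ → OCode
  | 0 => zero
  | 1 => succ
  | 2 => left
  | 3 => right
  | 4 => oracle
  | n + 5 =>
    let m := n.div2.div2
    have hm : m < n + 5 := by
      simp only [m, Nat.div2_val]
      have : n / 2 / 2 ≤ n := le_trans (Nat.div_le_self _ _) (Nat.div_le_self _ _)
      omega
    have _m1 : m.unpair.1 < n + 5 := lt_of_le_of_lt m.unpair_left_le hm
    have _m2 : m.unpair.2 < n + 5 := lt_of_le_of_lt m.unpair_right_le hm
    match n.bodd, n.div2.bodd with
    | false, false => pair (ofNat m.unpair.1) (ofNat m.unpair.2)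
    | false, true => comp (ofNat m.unpair.1) (ofNat m.unpair.2)
    | true, false => prec (ofNat m.unpair.1) (ofNat m.unpair.2)
    | true, true => rfind' (ofNat m)
decreasing_by all_goals first | exact _m1 | exact _m2 | exact hm

end OCode

open Classical in
/-- The characteristic function of a set of naturals. -/
noncomputable def chi (A : Set ℕ) : ℕ → ℕ := fun n => if n ∈ A then 1 else 0

/-- The Turing jump `A′` of a set `A ⊆ ℕ`. -/
noncomputable def jump (A : Set ℕ) : Set ℕ :=
  {e | ((OCode.ofNat e).eval (chi A) e).Dom}

/-- `A` is Turing reducible to `B`. -/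
def TuringLE (A B : Set ℕ) : Prop :=
  ∃ c : OCode, ∀ n, c.eval (chi B) n = Part.some (chi A n)

/-- `A` is computably enumerable relative to `B`. -/
def CEIn (A B : Set ℕ) : Prop :=
  ∃ c : OCode, A = {n | (c.eval (chi B) n).Dom}

/-- The projection `π₁(B) = {x : ∃ y, ⟨x,y⟩ ∈ B}`; `B` is an enumeration of `π₁(B)`. -/
def proj1 (C : Set ℕ) : Set ℕ := {x | ∃ y, Nat.pair x y ∈ C}

/-- `E : 2^ℕ → 2^ℕ` is an enumeration operator: some Turing functional `Γ`, given any
enumeration `C` of any set `A` as oracle, is total with values in `{0,1}` and computes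
the characteristic function of an enumeration of `E(A)`. -/
def IsEnumOp (E : Set ℕ → Set ℕ) : Prop :=
  ∃ Γ : OCode, ∀ A C : Set ℕ, proj1 C = A →
    (∀ n, Γ.eval (chi C) n = Part.some 0 ∨ Γ.eval (chi C) n = Part.some 1) ∧
    proj1 {n | Γ.eval (chi C) n = Part.some 1} = E A

section Aux

open Nat.Partrec (Code)
open Nat.Partrec.Code

namespace OCode

/-- Encoding of oracle codes, inverse to `ofNat`. -/
def encodeO : OCode → ℕ
  | zero => 0
  | succ => 1
  | left => 2
  | right => 3
  | oracle => 4
  | pair cf cg => 2 * (2 * Nat.pair (encodeO cf) (encodeO cg)) + 5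
  | comp cf cg => 2 * (2 * Nat.pair (encodeO cf) (encodeO cg) + 1) + 5
  | prec cf cg => (2 * (2 * Nat.pair (encodeO cf) (encodeO cg)) + 1) + 5
  | rfind' cf => (2 * (2 * encodeO cf + 1) + 1) + 5

theorem ofNat_encodeO : ∀ c : OCode, ofNat (encodeO c) = c := by
  intro c
  induction c <;> simp [encodeO, ofNat, Nat.div2_val, *]

/-- Constant function code. -/
def constO : ℕ → OCode
  | 0 => zero
  | n + 1 => comp succ (constO n)

@[simp] theorem eval_constO (O : ℕ → ℕ) : ∀ n m, eval O (constO n) m = Part.some n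
  | 0, _ => rfl
  | n + 1, m => by simp [constO, eval, eval_constO O n, Seq.seq]

/-- A code that converges (on any input) iff the oracle is `0` at `x`. -/
def dbar (x : ℕ) : OCode := rfind' (comp oracle (constO x))

theorem dbar_dom (O : ℕ → ℕ) (x n : ℕ) : (eval O (dbar x) n).Dom ↔ O x = 0 := by
  have h : ∀ k, eval O (comp oracle (constO x)) k = Part.some (O x) := by
    intro k; simp [eval]
  simp only [dbar, eval, Nat.unpaired, h, Part.map_Dom, Nat.rfind_dom]
  constructor
  · rintro ⟨m, hm, -⟩
    simpa using hm
  · intro h0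
    exact ⟨0, by simpa using h0, by intro m hm; simp⟩

/-- Translation of an oracle code into a plain code, given a code for the oracle. -/
def toCode (cO : Code) : OCode → Code
  | zero => Code.zero
  | succ => Code.succ
  | left => Code.left
  | right => Code.right
  | oracle => cO
  | pair cf cg => Code.pair (toCode cO cf) (toCode cO cg)
  | comp cf cg => Code.comp (toCode cO cf) (toCode cO cg)
  | prec cf cg => Code.prec (toCode cO cf) (toCode cO cg)
  | rfind' cf => Code.rfind' (toCode cO cf)

theorem eval_toCode {O : ℕ → ℕ} {cO : Code} (hO : ∀ n, cO.eval n = Part.some (O n)) :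
    ∀ c : OCode, (toCode cO c).eval = OCode.eval O c := by
  intro c
  induction c with
  | zero => rfl
  | succ => rfl
  | left => rfl
  | right => rfl
  | oracle => funext n; exact hO n
  | pair cf cg ihf ihg => simp only [toCode, OCode.eval, Nat.Partrec.Code.eval, ihf, ihg]; rfl
  | comp cf cg ihf ihg => simp only [toCode, OCode.eval, Nat.Partrec.Code.eval, ihf, ihg]; rfl
  | prec cf cg ihf ihg => simp only [toCode, OCode.eval, Nat.Partrec.Code.eval, ihf, ihg]; rfl
  | rfind' cf ihf => simp only [toCode, OCode.eval, Nat.Partrec.Code.eval, ihf]; rfl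

end OCode

theorem chi_eq_zero_iff {A : Set ℕ} {x : ℕ} : chi A x = 0 ↔ x ∉ A := by
  by_cases h : x ∈ A <;> simp [chi, h]

/-- The numeric reduction `x ↦ encodeO (dbar x)`. -/
def gred (x : ℕ) : ℕ := OCode.encodeO (OCode.dbar x)

theorem gred_eq (x : ℕ) :
    gred x = (2 * (2 * (2 * (2 * Nat.pair 4 (OCode.encodeO (OCode.constO x)) + 1) + 5) + 1) + 1) + 5 :=
  rfl

theorem encode_constO_succ (n : ℕ) :
    OCode.encodeO (OCode.constO (n + 1)) =
      2 * (2 * Nat.pair 1 (OCode.encodeO (OCode.constO n)) + 1) + 5 := rfl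

theorem primrec_encode_constO : Primrec fun x => OCode.encodeO (OCode.constO x) := by
  have hstep : Primrec fun ih : ℕ => 2 * (2 * Nat.pair 1 ih + 1) + 5 :=
    Primrec.nat_add.comp
      (Primrec.nat_mul.comp (Primrec.const 2)
        (Primrec.nat_add.comp
          (Primrec.nat_mul.comp (Primrec.const 2)
            (Primrec₂.natPair.comp (Primrec.const 1) Primrec.id))
          (Primrec.const 1)))
      (Primrec.const 5)
  have : Primrec (Nat.rec (motive := fun _ => ℕ) 0
      (fun _ ih => 2 * (2 * Nat.pair 1 ih + 1) + 5)) :=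
    Primrec.nat_rec₁ 0 (hstep.comp Primrec.snd).to₂
  refine this.of_eq fun x => ?_
  induction x with
  | zero => rfl
  | succ n ih => simp only [encode_constO_succ, ← ih]

theorem computable_gred : Computable gred := by
  have h2 : Primrec fun e : ℕ => (2 * (2 * (2 * (2 * e + 1) + 5) + 1) + 1) + 5 :=
    Primrec.nat_add.comp
      (Primrec.nat_add.comp
        (Primrec.nat_mul.comp (Primrec.const 2)
          (Primrec.nat_add.comp
            (Primrec.nat_mul.comp (Primrec.const 2)
              (Primrec.nat_add.comp
                (Primrec.nat_mul.comp (Primrec.const 2)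
                  (Primrec.nat_add.comp
                    (Primrec.nat_mul.comp (Primrec.const 2) Primrec.id)
                    (Primrec.const 1)))
                (Primrec.const 5)))
            (Primrec.const 1)))
        (Primrec.const 1))
      (Primrec.const 5)
  have h3 : Primrec fun x => Nat.pair 4 (OCode.encodeO (OCode.constO x)) :=
    Primrec₂.natPair.comp (Primrec.const 4) primrec_encode_constO
  exact ((h2.comp h3).of_eq fun x => (gred_eq x).symm).to_comp

end Aux

/-- The jump operator `A ↦ A′` is not an enumeration operator: no Turing functional `Γ`,
given an arbitrary enumeration `C` of an arbitrary set `A` as oracle, is total with values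
in `{0,1}` and computes the characteristic function of an enumeration of `A′`. -/
theorem jump_not_enumeration_operator : ¬ IsEnumOp jump := by
  classical
  rintro ⟨Γ, hΓ⟩
  -- A computable enumeration `C` of the halting set `{x | (eval (ofNat x) 0).Dom}`.
  set C : Set ℕ :=
    {p | (Nat.Partrec.Code.evaln p.unpair.2
      (Denumerable.ofNat Nat.Partrec.Code p.unpair.1) 0).isSome} with hCdef
  have hproj : ∀ x, x ∈ proj1 C ↔
      (Nat.Partrec.Code.eval (Denumerable.ofNat Nat.Partrec.Code x) 0).Dom := by
    intro x
    constructor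
    · rintro ⟨y, hy⟩
      have hy' : (Nat.Partrec.Code.evaln (Nat.pair x y).unpair.2
          (Denumerable.ofNat Nat.Partrec.Code (Nat.pair x y).unpair.1) 0).isSome := hy
      rw [Nat.unpair_pair] at hy'
      obtain ⟨v, hv⟩ := Option.isSome_iff_exists.mp hy'
      exact Part.dom_iff_mem.mpr ⟨v, Nat.Partrec.Code.evaln_sound hv⟩
    · intro h
      obtain ⟨v, hv⟩ := Part.dom_iff_mem.mp h
      obtain ⟨k, hk⟩ := (Nat.Partrec.Code.evaln_complete.mp hv)
      refine ⟨k, ?_⟩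
      show (Nat.Partrec.Code.evaln (Nat.pair x k).unpair.2
        (Denumerable.ofNat Nat.Partrec.Code (Nat.pair x k).unpair.1) 0).isSome
      rw [Nat.unpair_pair]
      exact Option.isSome_iff_exists.mpr ⟨v, hk⟩
  -- `chi C` is computable
  have hb : Primrec fun p : ℕ => (Nat.Partrec.Code.evaln p.unpair.2
      (Denumerable.ofNat Nat.Partrec.Code p.unpair.1) 0).isSome := by
    have h1 : Primrec fun p : ℕ => ((p.unpair.2,
        (Denumerable.ofNat Nat.Partrec.Code p.unpair.1)), 0) :=
      ((Primrec.snd.comp Primrec.unpair).pair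
        ((Primrec.ofNat _).comp (Primrec.fst.comp Primrec.unpair))).pair (Primrec.const 0)
    exact Primrec.option_isSome.comp (Nat.Partrec.Code.primrec_evaln.comp h1)
  have hchiC : Computable (chi C) := by
    have : Primrec fun p : ℕ => cond ((Nat.Partrec.Code.evaln p.unpair.2
        (Denumerable.ofNat Nat.Partrec.Code p.unpair.1) 0).isSome) 1 0 :=
      Primrec.cond hb (Primrec.const 1) (Primrec.const 0)
    refine (this.of_eq fun p => ?_).to_comp
    by_cases h : p ∈ C
    · have hb' : (Nat.Partrec.Code.evaln p.unpair.2
          (Denumerable.ofNat Nat.Partrec.Code p.unpair.1) 0).isSome = true := h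
      simp [chi, h, hb']
    · have hb' : (Nat.Partrec.Code.evaln p.unpair.2
          (Denumerable.ofNat Nat.Partrec.Code p.unpair.1) 0).isSome = false := by
        simpa [hCdef] using h
      simp [chi, h, hb']
  obtain ⟨cO, hcO⟩ := Nat.Partrec.Code.exists_code.1 (Partrec.nat_iff.1 hchiC)
  have hO : ∀ n, cO.eval n = Part.some (chi C n) := fun n => congrFun hcO n
  have hev : (OCode.toCode cO Γ).eval = OCode.eval (chi C) Γ := OCode.eval_toCode hO Γ
  obtain ⟨htot, hjump⟩ := hΓ (proj1 C) C rfl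
  -- the r.e. witness function
  set F : Nat.Partrec.Code →. ℕ := fun c =>
    Nat.rfind fun y => Part.map (fun v => decide (v = 1))
      (OCode.eval (chi C) Γ (Nat.pair (gred (Encodable.encode c)) y)) with hFdef
  have hF : Partrec F := by
    have hge : Computable fun c : Nat.Partrec.Code => gred (Encodable.encode c) :=
      computable_gred.comp Computable.encode
    have harg : Computable fun p : Nat.Partrec.Code × ℕ =>
        Nat.pair (gred (Encodable.encode p.1)) p.2 :=
      Primrec₂.natPair.to_comp.comp (hge.comp Computable.fst) Computable.snd
    have heval : Partrec fun p : Nat.Partrec.Code × ℕ =>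
        (OCode.toCode cO Γ).eval (Nat.pair (gred (Encodable.encode p.1)) p.2) :=
      Nat.Partrec.Code.eval_part.comp (Computable.const _) harg
    have hdec : Computable fun q : (Nat.Partrec.Code × ℕ) × ℕ => decide (q.2 = 1) :=
      (primrecPred_iff_primrec_decide.mp (Primrec.eq.comp Primrec.snd (Primrec.const 1))).to_comp
    have hmap : Partrec₂ fun (c : Nat.Partrec.Code) (y : ℕ) =>
        Part.map (fun v => decide (v = 1))
          (OCode.eval (chi C) Γ (Nat.pair (gred (Encodable.encode c)) y)) := by
      have := heval.map hdec.to₂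
      refine this.of_eq fun p => ?_
      rw [hev]
    exact Partrec.rfind hmap
  have hFdom : ∀ c : Nat.Partrec.Code, (F c).Dom ↔
      ∃ y, OCode.eval (chi C) Γ (Nat.pair (gred (Encodable.encode c)) y) = Part.some 1 := by
    intro c
    rw [hFdef]
    simp only [Nat.rfind_dom]
    constructor
    · rintro ⟨y, hy, -⟩
      rw [Part.mem_map_iff] at hy
      obtain ⟨v, hv, hdec⟩ := hy
      have hv1 : v = 1 := by simpa using hdec
      subst hv1
      exact ⟨y, Part.eq_some_iff.mpr hv⟩
    · rintro ⟨y, hy⟩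
      refine ⟨y, ?_, ?_⟩
      · beta_reduce; rw [hy]; simp
      · intro m _
        rcases htot (Nat.pair (gred (Encodable.encode c)) m) with h | h <;> simp [h]
  -- conclude that the complement of the halting problem is r.e.
  have hre : REPred fun c : Nat.Partrec.Code => ¬(Nat.Partrec.Code.eval c 0).Dom := by
    refine hF.dom_re.of_eq fun c => ?_
    rw [hFdom]
    have h1 : (∃ y, OCode.eval (chi C) Γ
          (Nat.pair (gred (Encodable.encode c)) y) = Part.some 1) ↔
        gred (Encodable.encode c) ∈ jump (proj1 C) := by
      rw [← hjump]; exact Iff.rfl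
    have h2 : gred (Encodable.encode c) ∈ jump (proj1 C) ↔
        Encodable.encode c ∉ proj1 C := by
      show (OCode.eval (chi (proj1 C))
        (OCode.ofNat (gred (Encodable.encode c))) (gred (Encodable.encode c))).Dom ↔ _
      rw [show OCode.ofNat (gred (Encodable.encode c)) = OCode.dbar (Encodable.encode c) from
        OCode.ofNat_encodeO _]
      rw [OCode.dbar_dom]
      exact chi_eq_zero_iff
    have h3 : Encodable.encode c ∉ proj1 C ↔ ¬(Nat.Partrec.Code.eval c 0).Dom := by
      rw [hproj]
      simp
    rw [h1, h2, h3]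
  exact ComputablePred.halting_problem_not_re 0 hre
end

section
/- For any polynomial f ∈ ℤ[X₁,X₂,…], if the measure α(f) of 𝒜(f) = {W ⊆ ℙ : f ∈ HTP(R_W)} equals 0, then 𝒜(f) = ∅, 𝒞(f) = 2^ℙ, and the boundary set ℬ(f) is empty; hence β(f) = μ(ℬ(f)) < 1 always. -/
/-- The subring `R_W = ℤ[W⁻¹]` of `ℚ` inverting exactly the primes in `W`. -/
def ringOf (W : Set ℕ) : Subring ℚ :=
  Subring.closure {x : ℚ | ∃ p ∈ W, x = ((p : ℚ))⁻¹}

/-- Hilbert's Tenth Problem for `R_W`: the set of integer polynomials in the variables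
`X₀, X₁, …` having a solution in `R_W`. -/
def HTP (W : Set ℕ) : Set (MvPolynomial ℕ ℤ) :=
  {f | ∃ v : ℕ → ℚ, (∀ n, v n ∈ ringOf W) ∧ MvPolynomial.aeval v f = 0}

/-- A monomial `c · Xᵥ₁^e₁ ⋯ Xᵥⱼ^eⱼ` from a coefficient and a list of (variable, exponent)
pairs. -/
noncomputable def decodeMono (cl : ℤ × List (ℕ × ℕ)) : MvPolynomial ℕ ℤ :=
  MvPolynomial.C cl.1 * (cl.2.map fun ve => (MvPolynomial.X ve.1) ^ ve.2).prod

/-- A Gödel numbering of the polynomials in `ℤ[X₀, X₁, …]` (every polynomial, written as a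
sum of monomials, arises as some `decodePoly n`), coding `HTP(R_W)` as a subset of `ℕ`. -/
noncomputable def decodePoly (n : ℕ) : MvPolynomial ℕ ℤ :=
  ((Denumerable.ofNat (List (ℤ × List (ℕ × ℕ))) n).map decodeMono).sum
open MeasureTheory

/-- The fair-coin (Bernoulli(1/2) product) measure on Cantor space `ℕ → Bool`,
realized as the pushforward of Lebesgue measure on `[0,1)` under the binary-digit map. -/
noncomputable def cantorMeasure : Measure (ℕ → Bool) :=
  Measure.map (fun x : ℝ => fun n : ℕ => decide (Nat.floor (x * 2 ^ (n + 1)) % 2 = 1))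
    (volume.restrict (Set.Ico (0 : ℝ) 1))

/-- Points of the Cantor space `2^ℙ` of sets of primes. -/
abbrev PrimeCantor : Type := {p : ℕ // p.Prime} → Bool

/-- The standard product (fair-coin) measure on `2^ℙ`. -/
noncomputable def primeCantorMeasure : MeasureTheory.Measure PrimeCantor :=
  cantorMeasure.map (fun x : ℕ → Bool => fun p : {p : ℕ // p.Prime} => x (Nat.count Nat.Prime p.1))

/-- The set of primes coded by a point of `2^ℙ`. -/
def toSet (W : PrimeCantor) : Set ℕ := {n | ∃ h : n.Prime, W ⟨n, h⟩ = true}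

/-- `𝒜(f)`: the class of `W ⊆ ℙ` such that `f` has a solution in `R_W = ℤ[W⁻¹]`. -/
def Acl (f : MvPolynomial ℕ ℤ) : Set PrimeCantor := {W | f ∈ HTP (toSet W)}

/-- `𝒞(f)`: the class of `W ⊆ ℙ` for which some finite set `S₀ ⊆ ℙ ∖ W` of non-inverted
primes already rules out any solution: `f ∉ HTP(R_{ℙ∖S₀})`. -/
def Ccl (f : MvPolynomial ℕ ℤ) : Set PrimeCantor :=
  {W | ∃ S : Finset {p : ℕ // p.Prime}, (∀ p ∈ S, W p = false) ∧
        f ∉ HTP ({q : ℕ | q.Prime} \ ↑(S.image Subtype.val))}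

/-- `ℬ(f) = 2^ℙ − 𝒜(f) − 𝒞(f)`, the boundary set of `f`. -/
def Bcl (f : MvPolynomial ℕ ℤ) : Set PrimeCantor := (Set.univ \ Acl f) \ Ccl f

lemma ringOf_mono {W W' : Set ℕ} (h : W ⊆ W') : ringOf W ≤ ringOf W' :=
  Subring.closure_mono (fun x ⟨p, hp, hx⟩ => ⟨p, h hp, hx⟩)

lemma HTP_mono {W W' : Set ℕ} (h : W ⊆ W') : HTP W ⊆ HTP W' :=
  fun _ ⟨v, hv, he⟩ => ⟨v, fun n => ringOf_mono h (hv n), he⟩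

lemma exists_finset_ringOf {W : Set ℕ} {x : ℚ} (hx : x ∈ ringOf W) :
    ∃ P : Finset ℕ, ↑P ⊆ W ∧ x ∈ ringOf ↑P := by
  induction hx using Subring.closure_induction with
  | mem x hx =>
    obtain ⟨p, hp, rfl⟩ := hx
    exact ⟨{p}, by simpa using hp, Subring.subset_closure ⟨p, by simp⟩⟩
  | zero => exact ⟨∅, by simp, zero_mem _⟩
  | one => exact ⟨∅, by simp, one_mem _⟩
  | add x y hx hy ihx ihy =>
    obtain ⟨P, hP, hxP⟩ := ihx; obtain ⟨Q, hQ, hyQ⟩ := ihy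
    exact ⟨P ∪ Q, by simp only [Finset.coe_union, Set.union_subset_iff]; exact ⟨hP, hQ⟩,
      add_mem (ringOf_mono (by intro a ha; simp only [Finset.coe_union]; tauto) hxP)
        (ringOf_mono (by intro a ha; simp only [Finset.coe_union]; tauto) hyQ)⟩
  | neg x hx ihx =>
    obtain ⟨P, hP, hxP⟩ := ihx
    exact ⟨P, hP, neg_mem hxP⟩
  | mul x y hx hy ihx ihy =>
    obtain ⟨P, hP, hxP⟩ := ihx; obtain ⟨Q, hQ, hyQ⟩ := ihy
    exact ⟨P ∪ Q, by simp only [Finset.coe_union, Set.union_subset_iff]; exact ⟨hP, hQ⟩,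
      mul_mem (ringOf_mono (by intro a ha; simp only [Finset.coe_union]; tauto) hxP)
        (ringOf_mono (by intro a ha; simp only [Finset.coe_union]; tauto) hyQ)⟩

lemma exists_finset_HTP {W : Set ℕ} {f : MvPolynomial ℕ ℤ} (hf : f ∈ HTP W) :
    ∃ P : Finset ℕ, ↑P ⊆ W ∧ f ∈ HTP ↑P := by
  obtain ⟨v, hv, he⟩ := hf
  choose Pn hPn hvPn using fun n => exists_finset_ringOf (hv n)
  classical
  refine ⟨f.vars.sup Pn, ?_, ?_⟩
  · intro p hp
    rw [Finset.mem_coe, Finset.mem_sup] at hp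
    obtain ⟨n, _, hpn⟩ := hp
    exact hPn n hpn
  · refine ⟨fun n => if n ∈ f.vars then v n else 0, fun n => ?_, ?_⟩
    · by_cases hn : n ∈ f.vars
      · simp only [hn, if_pos]
        exact ringOf_mono (by exact_mod_cast Finset.coe_subset.mpr (Finset.le_sup hn)) (hvPn n)
      · simp only [if_neg hn]; exact zero_mem _
    · rw [← he]
      simp only [MvPolynomial.aeval_def]
      apply MvPolynomial.eval₂Hom_congr' rfl _ rfl
      intro i hi _
      simp [hi]

lemma measurable_D : Measurable
    (fun x : ℝ => fun n : ℕ => decide (Nat.floor (x * 2 ^ (n + 1)) % 2 = 1)) := by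
  refine measurable_pi_lambda _ fun n => ?_
  exact (measurable_from_top (f := fun k : ℕ => decide (k % 2 = 1))).comp
    ((measurable_id.mul_const _).nat_floor)

lemma measurable_g : Measurable
    (fun x : ℕ → Bool => fun p : {p : ℕ // p.Prime} => x (Nat.count Nat.Prime p.1)) :=
  measurable_pi_lambda _ fun p => measurable_pi_apply _

lemma digit_true {M n : ℕ} (hn : n < M) {t : ℝ}
    (ht : t ∈ Set.Ico (1 - 1 / 2 ^ M : ℝ) 1) :
    Nat.floor (t * 2 ^ (n + 1)) % 2 = 1 := by
  obtain ⟨h1, h2⟩ := ht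
  have hpow : (2 : ℝ) ^ (n + 1) ≤ 2 ^ M :=
    pow_le_pow_right₀ (by norm_num) hn
  have hM1 : (1 : ℝ) / 2 ^ M ≤ 1 := by
    rw [div_le_one (by positivity)]
    calc (1:ℝ) = 2 ^ 0 := by norm_num
    _ ≤ 2 ^ M := pow_le_pow_right₀ (by norm_num) (Nat.zero_le M)
  have ht0 : (0 : ℝ) ≤ t := le_trans (by linarith) h1
  have hfl : Nat.floor (t * 2 ^ (n + 1)) = 2 ^ (n + 1) - 1 := by
    rw [Nat.floor_eq_iff (by positivity), Nat.cast_sub Nat.one_le_two_pow]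
    push_cast
    have e1 : (1 - 1 / 2 ^ M : ℝ) * 2 ^ (n + 1) ≤ t * 2 ^ (n + 1) :=
      mul_le_mul_of_nonneg_right h1 (by positivity)
    have hdiv : (1 / 2 ^ M : ℝ) * 2 ^ (n + 1) ≤ 1 := by
      rw [div_mul_eq_mul_div, one_mul, div_le_one (by positivity)]
      exact hpow
    constructor
    · nlinarith
    · nlinarith [mul_lt_mul_of_pos_right h2 (pow_pos (by norm_num : (0:ℝ) < 2) (n + 1))]
  rw [hfl]
  have h3 : 1 ≤ 2 ^ n := Nat.one_le_two_pow
  have h4 : 2 ^ (n + 1) = 2 * 2 ^ n := by ring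
  omega

lemma cylinder_meas (P : Finset ℕ) :
    MeasurableSet {V : PrimeCantor | ∀ p ∈ P, ∀ h : p.Prime, V ⟨p, h⟩ = true} := by
  have : {V : PrimeCantor | ∀ p ∈ P, ∀ h : p.Prime, V ⟨p, h⟩ = true}
      = ⋂ p ∈ P, ⋂ h : p.Prime, (fun V : PrimeCantor => V ⟨p, h⟩) ⁻¹' {true} := by
    ext V; simp [Set.mem_iInter]
  rw [this]
  exact MeasurableSet.biInter (Set.to_countable _) fun p _ =>
    MeasurableSet.iInter fun h => measurable_pi_apply _ (by trivial)

lemma pcm_univ : primeCantorMeasure Set.univ = 1 := by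
  rw [primeCantorMeasure, Measure.map_apply measurable_g MeasurableSet.univ,
    Set.preimage_univ, cantorMeasure, Measure.map_apply measurable_D MeasurableSet.univ,
    Set.preimage_univ, Measure.restrict_apply MeasurableSet.univ]
  simp

lemma cylinder_pos (P : Finset ℕ) :
    0 < primeCantorMeasure {V : PrimeCantor | ∀ p ∈ P, ∀ h : p.Prime, V ⟨p, h⟩ = true} := by
  set C := {V : PrimeCantor | ∀ p ∈ P, ∀ h : p.Prime, V ⟨p, h⟩ = true} with hC
  set M := P.sup (fun p => Nat.count Nat.Prime p) + 1 with hM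
  have hM1 : (1 : ℝ) / 2 ^ M ≤ 1 := by
    rw [div_le_one (by positivity)]
    calc (1:ℝ) = 2 ^ 0 := by norm_num
    _ ≤ 2 ^ M := pow_le_pow_right₀ (by norm_num) (Nat.zero_le M)
  have hsub : Set.Ico (1 - 1 / 2 ^ M : ℝ) 1 ⊆
      ((fun x : ℝ => fun n : ℕ => decide (Nat.floor (x * 2 ^ (n + 1)) % 2 = 1)) ⁻¹'
        ((fun x : ℕ → Bool => fun p : {p : ℕ // p.Prime} => x (Nat.count Nat.Prime p.1)) ⁻¹' C))
      ∩ Set.Ico (0 : ℝ) 1 := by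
    intro t ht
    refine ⟨?_, le_trans (by linarith) ht.1, ht.2⟩
    intro p hp h
    rw [decide_eq_true_eq]
    exact digit_true (Nat.lt_succ_of_le (Finset.le_sup (f := fun p => Nat.count Nat.Prime p) hp)) ht
  rw [primeCantorMeasure, Measure.map_apply measurable_g (cylinder_meas P),
    cantorMeasure, Measure.map_apply measurable_D (measurable_g (cylinder_meas P)),
    Measure.restrict_apply' measurableSet_Ico]
  calc (0 : ENNReal) < volume (Set.Ico (1 - 1 / 2 ^ M : ℝ) 1) := by
        rw [Real.volume_Ico]
        simp only [ENNReal.ofReal_pos]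
        have : (0:ℝ) < 1 / 2 ^ M := by positivity
        linarith
    _ ≤ _ := measure_mono hsub

lemma key_cylinder {f : MvPolynomial ℕ ℤ} {V : PrimeCantor} (hV : V ∈ Acl f) :
    ∃ P : Finset ℕ,
      {V' : PrimeCantor | ∀ p ∈ P, ∀ h : p.Prime, V' ⟨p, h⟩ = true} ⊆ Acl f := by
  obtain ⟨P, hPW, hfP⟩ := exists_finset_HTP hV
  refine ⟨P, fun V' hV' => ?_⟩
  refine HTP_mono (fun p hp => ?_) hfP
  obtain ⟨hpr, -⟩ := hPW hp
  exact ⟨hpr, hV' p hp hpr⟩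

/-- If `α(f) = μ(𝒜(f)) = 0` then `𝒜(f) = ∅`, `𝒞(f) = 2^ℙ` and `ℬ(f) = ∅`;
hence `β(f) = μ(ℬ(f)) < 1` always. -/
theorem boundary_measure_lt_one (f : MvPolynomial ℕ ℤ) :
    (primeCantorMeasure (Acl f) = 0 →
      Acl f = ∅ ∧ Ccl f = Set.univ ∧ Bcl f = ∅) ∧
    primeCantorMeasure (Bcl f) < 1 := by
  have main0 : primeCantorMeasure (Acl f) = 0 → Acl f = ∅ := by
    intro h0
    by_contra hne
    obtain ⟨V, hV⟩ := Set.nonempty_iff_ne_empty.mpr hne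
    obtain ⟨P, hsub⟩ := key_cylinder hV
    have := lt_of_lt_of_le (cylinder_pos P) (measure_mono hsub)
    rw [h0] at this
    exact absurd this (by simp)
  have hCcl : Acl f = ∅ → Ccl f = Set.univ := by
    intro hA
    ext V
    simp only [Set.mem_univ, iff_true, Ccl, Set.mem_setOf_eq]
    refine ⟨∅, by simp, fun hf => ?_⟩
    have heq : {q : ℕ | q.Prime} \
        (((∅ : Finset {p : ℕ // p.Prime}).image Subtype.val : Finset ℕ) : Set ℕ)
        = toSet (fun _ => true) := by
      ext n; simp [toSet]
    rw [heq] at hf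
    have : (fun _ => true : PrimeCantor) ∈ Acl f := hf
    rw [hA] at this
    exact this
  have hBcl : Ccl f = Set.univ → Bcl f = ∅ := by
    intro hC
    simp [Bcl, hC]
  constructor
  · intro h0
    exact ⟨main0 h0, hCcl (main0 h0), hBcl (hCcl (main0 h0))⟩
  · by_cases hA : Acl f = ∅
    · rw [hBcl (hCcl hA)]
      simp
    · obtain ⟨V, hV⟩ := Set.nonempty_iff_ne_empty.mpr hA
      obtain ⟨P, hsub⟩ := key_cylinder hV
      have hCle : primeCantorMeasure
          {V' : PrimeCantor | ∀ p ∈ P, ∀ h : p.Prime, V' ⟨p, h⟩ = true} ≤ 1 :=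
        pcm_univ ▸ measure_mono (Set.subset_univ _)
      have hBsub : Bcl f ⊆
          {V' : PrimeCantor | ∀ p ∈ P, ∀ h : p.Prime, V' ⟨p, h⟩ = true}ᶜ :=
        fun V' hV' hc => hV'.1.2 (hsub hc)
      calc primeCantorMeasure (Bcl f)
          ≤ primeCantorMeasure {V' : PrimeCantor | ∀ p ∈ P, ∀ h : p.Prime, V' ⟨p, h⟩ = true}ᶜ :=
            measure_mono hBsub
        _ = primeCantorMeasure Set.univ - primeCantorMeasure
              {V' : PrimeCantor | ∀ p ∈ P, ∀ h : p.Prime, V' ⟨p, h⟩ = true} :=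
            measure_compl (cylinder_meas P) (lt_of_le_of_lt hCle ENNReal.one_lt_top).ne
        _ = 1 - primeCantorMeasure
              {V' : PrimeCantor | ∀ p ∈ P, ∀ h : p.Prime, V' ⟨p, h⟩ = true} := by
            rw [pcm_univ]
        _ < 1 := ENNReal.sub_lt_self ENNReal.one_ne_top one_ne_zero (cylinder_pos P).ne'
end

section
/- Let ⟨q_s⟩ be a strictly increasing sequence of positive rationals with limit r < 1. Define n₀ as the least integer with 2^{−n₀} ≤ q₀ and recursively n_{k+1} as the least n with (1 − 2^{−n})·∏_{i≤k}(1 − 2^{−n_i}) ≥ 1 − q_{k+1}. Then each n_{k+1} exists, is positive, and ∏_{k≥0}(1 − 2^{−n_k}) = 1 − r. -/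
open Filter

open Classical in
noncomputable def mepStep (q : ℕ → ℚ) (k : ℕ) (p : ℕ × ℝ) : ℕ × ℝ :=
  if h : ∃ m : ℕ, 1 - (q (k + 1) : ℝ) ≤ (1 - (2 : ℝ) ^ (-(m : ℤ))) * p.2 then
    (Nat.find h, (1 - (2 : ℝ) ^ (-(Nat.find h : ℤ))) * p.2)
  else (0, 0)

open Classical in
noncomputable def mepG (q : ℕ → ℚ) (h0 : ∃ m : ℕ, (2 : ℝ) ^ (-(m : ℤ)) ≤ (q 0 : ℝ)) :
    ℕ → ℕ × ℝ
  | 0 => (Nat.find h0, 1 - (2 : ℝ) ^ (-(Nat.find h0 : ℤ)))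
  | (k + 1) => mepStep q k (mepG q h0 k)

/-- Given a strictly increasing sequence of positive rationals `q_s → r < 1`, the recursively
defined minimal exponents `n₀` (least with `2^{−n₀} ≤ q₀`) and `n_{k+1}` (least `n` with
`(1 − 2^{−n})·∏_{i≤k}(1 − 2^{−n_i}) ≥ 1 − q_{k+1}`) all exist, each `n_{k+1}` is positive,
and `∏_{k}(1 − 2^{−n_k}) = 1 − r`. -/
theorem minimal_exponents_product_eq
    (q : ℕ → ℚ) (hpos : ∀ s, 0 < q s) (hmono : StrictMono q)
    (r : ℝ) (hlim : Tendsto (fun s => (q s : ℝ)) atTop (nhds r)) (hr : r < 1) :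
    ∃ n : ℕ → ℕ,
      IsLeast {m : ℕ | (2 : ℝ) ^ (-(m : ℤ)) ≤ (q 0 : ℝ)} (n 0) ∧
      (∀ k, IsLeast {m : ℕ |
          1 - (q (k + 1) : ℝ) ≤ (1 - (2 : ℝ) ^ (-(m : ℤ))) *
            ∏ i ∈ Finset.range (k + 1), (1 - (2 : ℝ) ^ (-(n i : ℤ)))} (n (k + 1))) ∧
      (∀ k, 0 < n (k + 1)) ∧
      Tendsto (fun K => ∏ k ∈ Finset.range K, (1 - (2 : ℝ) ^ (-(n k : ℤ)))) atTop
        (nhds (1 - r)) := by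
  classical
  -- basic facts about q and r
  have hmorr : Monotone fun s => (q s : ℝ) := fun a b h => by
    show (q a : ℝ) ≤ (q b : ℝ)
    exact_mod_cast hmono.monotone h
  have hqr : ∀ s, (q s : ℝ) ≤ r := fun s => hmorr.ge_of_tendsto hlim s
  have hlt : ∀ s, (q s : ℝ) < r := fun s =>
    lt_of_lt_of_le (by exact_mod_cast hmono (Nat.lt_succ_self s)) (hqr (s + 1))
  have hq1 : ∀ s, (q s : ℝ) < 1 := fun s => (hlt s).trans hr
  have hq0 : ∀ s, (0 : ℝ) < (q s : ℝ) := fun s => by exact_mod_cast hpos s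
  have hhalf : ∀ m : ℕ, (2 : ℝ) ^ (-(m : ℤ)) = (1 / 2 : ℝ) ^ m := by
    intro m
    rw [zpow_neg, zpow_natCast, one_div, inv_pow]
  -- existence for the base case
  have h0 : ∃ m : ℕ, (2 : ℝ) ^ (-(m : ℤ)) ≤ (q 0 : ℝ) := by
    obtain ⟨m, hm⟩ := exists_pow_lt_of_lt_one (hq0 0) (by norm_num : (1 / 2 : ℝ) < 1)
    exact ⟨m, by rw [hhalf]; exact hm.le⟩
  -- key existence step
  have key : ∀ (c P : ℝ), 0 < P → 1 - c < P →
      ∃ m : ℕ, 1 - c ≤ (1 - (2 : ℝ) ^ (-(m : ℤ))) * P := by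
    intro c P hP hcP
    obtain ⟨m, hm⟩ := exists_pow_lt_of_lt_one (div_pos (by linarith : (0:ℝ) < P - (1 - c)) hP)
      (by norm_num : (1 / 2 : ℝ) < 1)
    refine ⟨m, ?_⟩
    rw [hhalf]
    have h2 := (lt_div_iff₀ hP).mp hm
    nlinarith
  set n : ℕ → ℕ := fun k => (mepG q h0 k).1 with hn
  set g : ℕ → ℕ × ℝ := fun k => mepG q h0 k with hgdef
  have hg0 : g 0 = (Nat.find h0, 1 - (2 : ℝ) ^ (-(Nat.find h0 : ℤ))) := rfl
  -- main invariant
  have claim : ∀ k, (g k).2 = (∏ i ∈ Finset.range (k + 1), (1 - (2 : ℝ) ^ (-(n i : ℤ)))) ∧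
      1 - (q k : ℝ) ≤ (g k).2 := by
    intro k
    induction k with
    | zero =>
      constructor
      · rw [hg0, Finset.prod_range_one]; rfl
      · rw [hg0]
        have := Nat.find_spec h0
        simp only
        linarith
    | succ k ih =>
      have hPpos : 0 < (g k).2 := lt_of_lt_of_le (by linarith [hq1 k]) ih.2
      have hex : ∃ m : ℕ, 1 - (q (k + 1) : ℝ) ≤ (1 - (2 : ℝ) ^ (-(m : ℤ))) * (g k).2 := by
        refine key _ _ hPpos ?_
        have : (q k : ℝ) < (q (k + 1) : ℝ) := by exact_mod_cast hmono (Nat.lt_succ_self k)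
        linarith [ih.2]
      have hg1 : g (k + 1) =
          (Nat.find hex, (1 - (2 : ℝ) ^ (-(Nat.find hex : ℤ))) * (g k).2) := by
        show mepStep q k (g k) = _
        rw [mepStep, dif_pos hex]
      constructor
      · rw [hg1, Finset.prod_range_succ, ← ih.1]
        have : n (k + 1) = Nat.find hex := by rw [hn]; exact congrArg Prod.fst hg1
        rw [this, mul_comm]
      · rw [hg1]
        exact Nat.find_spec hex
  -- IsLeast statement with (g k).2
  have main : ∀ k, IsLeast {m : ℕ |
      1 - (q (k + 1) : ℝ) ≤ (1 - (2 : ℝ) ^ (-(m : ℤ))) * (g k).2} (n (k + 1)) := by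
    intro k
    have hPpos : 0 < (g k).2 := lt_of_lt_of_le (by linarith [hq1 k]) (claim k).2
    have hex : ∃ m : ℕ, 1 - (q (k + 1) : ℝ) ≤ (1 - (2 : ℝ) ^ (-(m : ℤ))) * (g k).2 := by
      refine key _ _ hPpos ?_
      have : (q k : ℝ) < (q (k + 1) : ℝ) := by exact_mod_cast hmono (Nat.lt_succ_self k)
      linarith [(claim k).2]
    have hg1 : g (k + 1) =
        (Nat.find hex, (1 - (2 : ℝ) ^ (-(Nat.find hex : ℤ))) * (g k).2) := by
      show mepStep q k (g k) = _
      rw [mepStep, dif_pos hex]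
    have hnk : n (k + 1) = Nat.find hex := by rw [hn]; exact congrArg Prod.fst hg1
    rw [hnk]
    exact ⟨Nat.find_spec hex, fun m hm => Nat.find_min' hex hm⟩
  -- positivity
  have npos : ∀ k, 0 < n (k + 1) := by
    intro k
    rcases Nat.eq_zero_or_pos (n (k + 1)) with h | h
    · exfalso
      have hmem := (main k).1
      rw [h] at hmem
      simp only [Set.mem_setOf_eq, Nat.cast_zero, neg_zero, zpow_zero, sub_self,
        zero_mul] at hmem
      linarith [hq1 (k + 1)]
    · exact h
  -- the sequence of partial products
  set Pseq : ℕ → ℝ := fun K => ∏ k ∈ Finset.range K, (1 - (2 : ℝ) ^ (-(n k : ℤ))) with hPdef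
  have hPg : ∀ k, Pseq (k + 1) = (g k).2 := fun k => ((claim k).1).symm
  have hfacpos : ∀ k, 0 < 1 - (2 : ℝ) ^ (-(n k : ℤ)) := by
    intro k
    cases k with
    | zero =>
      have h := Nat.find_spec h0
      have : n 0 = Nat.find h0 := rfl
      rw [this]
      linarith [hq1 0]
    | succ k =>
      have h1 : 1 ≤ n (k + 1) := npos k
      have : (2 : ℝ) ^ (-(n (k + 1) : ℤ)) < 1 := by
        rw [hhalf]
        exact pow_lt_one₀ (by norm_num) (by norm_num) (Nat.one_le_iff_ne_zero.mp h1)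
      linarith
  have hfaclt : ∀ k, (2 : ℝ) ^ (-(n k : ℤ)) > 0 := fun k => by positivity
  have hPpos : ∀ K, 0 < Pseq K := fun K =>
    Finset.prod_pos fun i _ => hfacpos i
  have hanti : Antitone Pseq := by
    apply antitone_nat_of_succ_le
    intro K
    have : Pseq (K + 1) = Pseq K * (1 - (2 : ℝ) ^ (-(n K : ℤ))) := Finset.prod_range_succ _ K
    rw [this]
    exact mul_le_of_le_one_right (hPpos K).le (by linarith [hfaclt K])
  have hbdd : BddBelow (Set.range Pseq) := ⟨0, by rintro x ⟨K, rfl⟩; exact (hPpos K).le⟩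
  set L : ℝ := ⨅ K, Pseq K with hLdef
  have hL : Tendsto Pseq atTop (nhds L) := tendsto_atTop_ciInf hanti hbdd
  -- lower bound on L
  have hLlow : 1 - r ≤ L := by
    have h1 : Tendsto (fun k => 1 - (q k : ℝ)) atTop (nhds (1 - r)) :=
      tendsto_const_nhds.sub hlim
    have h2 : Tendsto (fun k => Pseq (k + 1)) atTop (nhds L) :=
      hL.comp (tendsto_add_atTop_nat 1)
    exact le_of_tendsto_of_tendsto' h1 h2 fun k => by rw [hPg k]; exact (claim k).2
  -- upper bound on L via minimality
  have hupper : ∀ k, 2 * Pseq (k + 2) - Pseq (k + 1) ≤ 1 - (q (k + 1) : ℝ) := by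
    intro k
    have h1 : 1 ≤ n (k + 1) := npos k
    have hnot : ¬ (1 - (q (k + 1) : ℝ) ≤
        (1 - (2 : ℝ) ^ (-((n (k + 1) - 1 : ℕ) : ℤ))) * (g k).2) := by
      intro hmem
      have := (main k).2 hmem
      omega
    have hcast : ((n (k + 1) - 1 : ℕ) : ℤ) = (n (k + 1) : ℤ) - 1 := by
      push_cast [h1]; ring
    have hdouble : (2 : ℝ) ^ (-((n (k + 1) - 1 : ℕ) : ℤ)) =
        2 * (2 : ℝ) ^ (-(n (k + 1) : ℤ)) := by
      rw [hcast, neg_sub, sub_eq_add_neg, zpow_add₀ (two_ne_zero)]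
      ring
    rw [hdouble] at hnot
    push_neg at hnot
    -- Pseq (k+2) = (1 - 2^{-n(k+1)}) * (g k).2
    have hP2 : Pseq (k + 2) = (1 - (2 : ℝ) ^ (-(n (k + 1) : ℤ))) * (g k).2 := by
      have : Pseq (k + 2) = Pseq (k + 1) * (1 - (2 : ℝ) ^ (-(n (k + 1) : ℤ))) :=
        Finset.prod_range_succ _ (k + 1)
      rw [this, hPg k, mul_comm]
    rw [hP2, hPg k]
    nlinarith [hnot]
  have hLhigh : L ≤ 1 - r := by
    have h1 : Tendsto (fun k => 2 * Pseq (k + 2) - Pseq (k + 1)) atTop (nhds (2 * L - L)) :=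
      ((hL.comp (tendsto_add_atTop_nat 2)).const_mul 2).sub (hL.comp (tendsto_add_atTop_nat 1))
    have h2 : Tendsto (fun k => 1 - (q (k + 1) : ℝ)) atTop (nhds (1 - r)) :=
      tendsto_const_nhds.sub (hlim.comp (tendsto_add_atTop_nat 1))
    have := le_of_tendsto_of_tendsto' h1 h2 hupper
    linarith
  have hLeq : L = 1 - r := le_antisymm hLhigh hLlow
  refine ⟨n, ?_, ?_, npos, ?_⟩
  · exact ⟨Nat.find_spec h0, fun m hm => Nat.find_min' h0 hm⟩
  · intro k
    have h := main k
    rwa [(claim k).1] at h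
  · rw [← hLeq]
    exact hL
end
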